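/- arXiv:1507.01768 — 2 statements merged into one kernel-verified Lean document; each statement's English description precedes it below -/
import Mathlib

section
/- Let X_1,...,X_N be i.i.d. real random variables taking values in [-a,a] with E[X_i] = μ and E[|X_i|] = μ̃, and let X̄ = (1/N)·∑X_i. Then there exists a universal constant C > 0 such that for every 0 < ε' ≤ 1/2 and every α > 0, the probability that |X̄ - μ| ≤ ε'·μ̃ + α is at least 1 - 4·exp(-C·N·α·ε'/a). -/
open MeasureTheory ProbabilityTheory Real

lemma exp_le_one_add_add_sq {u : ℝ} (hu : |u| ≤ 1) : Real.exp u ≤ 1 + u + u ^ 2 := by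
  have h := Real.exp_bound hu (n := 3) (by norm_num)
  have h2 : |u| ^ 3 ≤ |u| ^ 2 := pow_le_pow_of_le_one (abs_nonneg u) hu (by norm_num)
  have h3 : |u| ^ 2 = u ^ 2 := sq_abs u
  have h4 := abs_le.mp h
  simp only [Finset.sum_range_succ, Finset.sum_range_zero] at h4
  norm_num [Nat.factorial] at h4
  nlinarith [h4.1, h4.2]

lemma integrable_of_bdd' {Ω : Type} [MeasureSpace Ω] [IsProbabilityMeasure (ℙ : Measure Ω)]
    {f : Ω → ℝ} {M : ℝ} (hf : Measurable f) (h : ∀ ω, |f ω| ≤ M) : Integrable f ℙ :=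
  (integrable_const M).mono' hf.aestronglyMeasurable
    (Filter.Eventually.of_forall fun ω => by simpa [Real.norm_eq_abs] using h ω)

set_option maxHeartbeats 1000000 in
/-- Chernoff-Hoeffding bound relative to the mean of the absolute value. -/
theorem chernoff_abs_mean :
    ∃ C : ℝ, 0 < C ∧
      ∀ (N : ℕ), 0 < N →
      ∀ (Ω : Type) (_ : MeasureSpace Ω) (_ : IsProbabilityMeasure (ℙ : Measure Ω))
        (X : Fin N → Ω → ℝ) (a μ μt : ℝ), 0 < a →
        (∀ i, Measurable (X i)) →
        iIndepFun X ℙ →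
        (∀ i j, IdentDistrib (X i) (X j) ℙ ℙ) →
        (∀ i ω, X i ω ∈ Set.Icc (-a) a) →
        (∀ i, ∫ ω, X i ω ∂ℙ = μ) →
        (∀ i, ∫ ω, |X i ω| ∂ℙ = μt) →
        ∀ ε' α : ℝ, 0 < ε' → ε' ≤ 1/2 → 0 < α →
          ENNReal.ofReal (1 - 4 * Real.exp (-(C * N * α * ε' / a))) ≤
            ℙ {ω | |(1 / N : ℝ) * ∑ i, X i ω - μ| ≤ ε' * μt + α} := by
  refine ⟨1/2, by norm_num, ?_⟩
  intro N hN Ω _ hprob X a μ μt ha hmeas hindep hident hbound hmean habs ε' α hε hε2 hα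
  have hNpos : (0:ℝ) < N := Nat.cast_pos.mpr hN
  have habsb : ∀ i ω, |X i ω| ≤ a := fun i ω => abs_le.mpr ⟨(hbound i ω).1, (hbound i ω).2⟩
  have hμt : 0 ≤ μt := by
    rw [← habs ⟨0, hN⟩]
    exact integral_nonneg fun ω => abs_nonneg _
  set t : ℝ := ε' * μt + α with ht_def
  have ht : 0 < t := by positivity
  set s : ℝ := ε' / (2 * a) with hs_def
  have hs : 0 < s := by positivity
  have hsa' : s * a = ε' / 2 := by rw [hs_def]; field_simp
  have hsa : s * a ≤ 1 := by rw [hsa']; linarith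
  -- integrability facts
  have hXint : ∀ i, Integrable (X i) ℙ := fun i => integrable_of_bdd' (hmeas i) (habsb i)
  have hXsq : ∀ i, Integrable (fun ω => (X i ω) ^ 2) ℙ := fun i =>
    integrable_of_bdd' ((hmeas i).pow_const 2)
      (M := a ^ 2) (fun ω => by
        rw [abs_pow]; exact pow_le_pow_left₀ (abs_nonneg _) (habsb i ω) 2)
  have hXabs : ∀ i, Integrable (fun ω => |X i ω|) ℙ := fun i => (hXint i).abs
  -- ∫ X² ≤ a * μt
  have hsqle : ∀ i, ∫ ω, (X i ω) ^ 2 ∂ℙ ≤ a * μt := by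
    intro i
    have : ∫ ω, (X i ω) ^ 2 ∂ℙ ≤ ∫ ω, a * |X i ω| ∂ℙ := by
      refine integral_mono (hXsq i) ((hXabs i).const_mul a) fun ω => ?_
      have h1 : (X i ω) ^ 2 = |X i ω| * |X i ω| := by rw [← abs_mul, abs_of_nonneg (mul_self_nonneg _), sq]
      rw [h1]
      exact mul_le_mul_of_nonneg_right (habsb i ω) (abs_nonneg _)
    rwa [integral_const_mul, habs i] at this
  -- mgf bound
  have key : ∀ r : ℝ, |r| * a ≤ 1 → ∀ i,
      mgf (X i) ℙ r ≤ Real.exp (r * μ + r ^ 2 * (a * μt)) := by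
    intro r hr i
    have hpt : ∀ ω, Real.exp (r * X i ω) ≤ 1 + r * X i ω + (r * X i ω) ^ 2 := by
      intro ω
      refine exp_le_one_add_add_sq ?_
      rw [abs_mul]
      calc |r| * |X i ω| ≤ |r| * a := mul_le_mul_of_nonneg_left (habsb i ω) (abs_nonneg r)
        _ ≤ 1 := hr
    have hintexp : Integrable (fun ω => Real.exp (r * X i ω)) ℙ := by
      refine integrable_of_bdd' ((hmeas i).const_mul r).exp (M := Real.exp (|r| * a)) fun ω => ?_
      rw [abs_of_nonneg (Real.exp_nonneg _)]
      refine Real.exp_le_exp.mpr ?_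
      calc r * X i ω ≤ |r * X i ω| := le_abs_self _
        _ = |r| * |X i ω| := abs_mul _ _
        _ ≤ |r| * a := mul_le_mul_of_nonneg_left (habsb i ω) (abs_nonneg r)
    have e0 : Integrable (fun ω => r * X i ω) ℙ := (hXint i).const_mul r
    have e1 : Integrable (fun ω => 1 + r * X i ω) ℙ := (integrable_const 1).add e0
    have e2 : Integrable (fun ω => (r * X i ω) ^ 2) ℙ := by
      simpa [mul_pow] using ((hXsq i).const_mul (r ^ 2))
    have h1 : mgf (X i) ℙ r ≤ ∫ ω, (1 + r * X i ω + (r * X i ω) ^ 2) ∂ℙ := by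
      refine integral_mono hintexp ?_ hpt
      exact e1.add e2
    have h2 : ∫ ω, (1 + r * X i ω + (r * X i ω) ^ 2) ∂ℙ
        = 1 + r * μ + r ^ 2 * ∫ ω, (X i ω) ^ 2 ∂ℙ := by
      rw [integral_add e1 e2, integral_add (integrable_const 1) e0]
      simp only [integral_const, measure_univ, probReal_univ, ENNReal.toReal_one, smul_eq_mul, mul_one]
      rw [integral_const_mul, hmean i]
      have : ∫ ω, (r * X i ω) ^ 2 ∂ℙ = r ^ 2 * ∫ ω, (X i ω) ^ 2 ∂ℙ := by
        simp_rw [mul_pow]; rw [integral_const_mul]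
      rw [this]
    have h3 : 1 + r * μ + r ^ 2 * ∫ ω, (X i ω) ^ 2 ∂ℙ ≤ 1 + (r * μ + r ^ 2 * (a * μt)) := by
      have := mul_le_mul_of_nonneg_left (hsqle i) (sq_nonneg r)
      linarith
    calc mgf (X i) ℙ r ≤ 1 + r * μ + r ^ 2 * ∫ ω, (X i ω) ^ 2 ∂ℙ := h2 ▸ h1
      _ ≤ 1 + (r * μ + r ^ 2 * (a * μt)) := h3
      _ ≤ Real.exp (r * μ + r ^ 2 * (a * μt)) := by
          have := Real.add_one_le_exp (r * μ + r ^ 2 * (a * μt)); linarith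
  -- mgf of the sum
  have keysum : ∀ r : ℝ, |r| * a ≤ 1 →
      mgf (∑ i, X i) ℙ r ≤ Real.exp ((N : ℝ) * (r * μ + r ^ 2 * (a * μt))) := by
    intro r hr
    rw [hindep.mgf_sum hmeas]
    calc ∏ i : Fin N, mgf (X i) ℙ r
        ≤ ∏ _i : Fin N, Real.exp (r * μ + r ^ 2 * (a * μt)) :=
          Finset.prod_le_prod (fun i _ => mgf_nonneg) (fun i _ => key r hr i)
      _ = Real.exp (r * μ + r ^ 2 * (a * μt)) ^ N := by simp
      _ = Real.exp ((N : ℝ) * (r * μ + r ^ 2 * (a * μt))) := (Real.exp_nat_mul _ N).symm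
  have hsumint : ∀ r : ℝ, Integrable (fun ω => Real.exp (r * (∑ i, X i) ω)) ℙ := by
    intro r
    refine integrable_of_bdd' (by measurability) (M := Real.exp (|r| * (N * a))) fun ω => ?_
    rw [abs_of_nonneg (Real.exp_nonneg _)]
    refine Real.exp_le_exp.mpr ?_
    calc r * (∑ i, X i) ω ≤ |r * (∑ i, X i) ω| := le_abs_self _
      _ = |r| * |(∑ i, X i) ω| := abs_mul _ _
      _ ≤ |r| * (N * a) := by
          refine mul_le_mul_of_nonneg_left ?_ (abs_nonneg r)
          rw [Finset.sum_apply]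
          calc |∑ i, X i ω| ≤ ∑ i : Fin N, |X i ω| := Finset.abs_sum_le_sum_abs _ _
            _ ≤ ∑ _i : Fin N, a := Finset.sum_le_sum fun i _ => habsb i ω
            _ = N * a := by simp [mul_comm]
  -- the exponent bound
  have hexpbd : (N:ℝ) * (s ^ 2 * (a * μt)) - s * ((N:ℝ) * t) ≤ -(1/2 * N * α * ε' / a) := by
    have h2 : s ^ 2 * (a * μt) = s * (ε' / 2) * μt := by
      calc s ^ 2 * (a * μt) = s * (s * a) * μt := by ring
        _ = s * (ε' / 2) * μt := by rw [hsa']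
    have h3 : s * t = s * ε' * μt + s * α := by rw [ht_def]; ring
    have h4 : s * α = 1/2 * α * ε' / a := by rw [hs_def]; field_simp
    have h5 : s * (ε' / 2) * μt ≤ s * ε' * μt := by
      nlinarith [mul_nonneg (mul_nonneg hs.le hε.le) hμt]
    have h6 : s ^ 2 * (a * μt) - s * t ≤ -(s * α) := by rw [h2, h3]; linarith
    have h7 : (N:ℝ) * (s ^ 2 * (a * μt) - s * t) ≤ (N:ℝ) * (-(s * α)) :=
      mul_le_mul_of_nonneg_left h6 hNpos.le
    calc (N:ℝ) * (s ^ 2 * (a * μt)) - s * ((N:ℝ) * t)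
        = (N:ℝ) * (s ^ 2 * (a * μt) - s * t) := by ring
      _ ≤ (N:ℝ) * (-(s * α)) := h7
      _ = -((N:ℝ) * (s * α)) := by ring
      _ = -(1/2 * N * α * ε' / a) := by rw [h4]; ring
  set E : ℝ := 1/2 * (N:ℝ) * α * ε' / a with hE_def
  -- upper tail
  have hup : (ℙ {ω | (N:ℝ) * (μ + t) ≤ (∑ i, X i) ω}).toReal ≤ Real.exp (-E) := by
    have := measure_ge_le_exp_mul_mgf (X := ∑ i, X i) (μ := ℙ) ((N:ℝ) * (μ + t)) hs.le (hsumint s)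
    refine this.trans ?_
    calc Real.exp (-s * ((N:ℝ) * (μ + t))) * mgf (∑ i, X i) ℙ s
        ≤ Real.exp (-s * ((N:ℝ) * (μ + t))) * Real.exp ((N:ℝ) * (s * μ + s ^ 2 * (a * μt))) := by
          refine mul_le_mul_of_nonneg_left (keysum s ?_) (Real.exp_nonneg _)
          rwa [abs_of_pos hs]
      _ = Real.exp (-s * ((N:ℝ) * (μ + t)) + (N:ℝ) * (s * μ + s ^ 2 * (a * μt))) := (Real.exp_add _ _).symm
      _ ≤ Real.exp (-E) := by
          refine Real.exp_le_exp.mpr ?_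
          have : -s * ((N:ℝ) * (μ + t)) + (N:ℝ) * (s * μ + s ^ 2 * (a * μt))
              = (N:ℝ) * (s ^ 2 * (a * μt)) - s * ((N:ℝ) * t) := by ring
          rw [this, hE_def]; exact hexpbd
  -- lower tail
  have hlo : (ℙ {ω | (∑ i, X i) ω ≤ (N:ℝ) * (μ - t)}).toReal ≤ Real.exp (-E) := by
    have := measure_le_le_exp_mul_mgf (X := ∑ i, X i) (μ := ℙ) (t := -s) ((N:ℝ) * (μ - t))
      (neg_nonpos.mpr hs.le) (hsumint (-s))
    refine this.trans ?_
    calc Real.exp (-(-s) * ((N:ℝ) * (μ - t))) * mgf (∑ i, X i) ℙ (-s)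
        ≤ Real.exp (s * ((N:ℝ) * (μ - t))) * Real.exp ((N:ℝ) * ((-s) * μ + (-s) ^ 2 * (a * μt))) := by
          rw [neg_neg]
          refine mul_le_mul_of_nonneg_left (keysum (-s) ?_) (Real.exp_nonneg _)
          rwa [abs_neg, abs_of_pos hs]
      _ = Real.exp (s * ((N:ℝ) * (μ - t)) + (N:ℝ) * ((-s) * μ + (-s) ^ 2 * (a * μt))) := (Real.exp_add _ _).symm
      _ ≤ Real.exp (-E) := by
          refine Real.exp_le_exp.mpr ?_
          have : s * ((N:ℝ) * (μ - t)) + (N:ℝ) * ((-s) * μ + (-s) ^ 2 * (a * μt))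
              = (N:ℝ) * (s ^ 2 * (a * μt)) - s * ((N:ℝ) * t) := by ring
          rw [this, hE_def]; exact hexpbd
  -- assemble
  set A : Set Ω := {ω | |(1 / N : ℝ) * ∑ i, X i ω - μ| ≤ ε' * μt + α} with hA_def
  have hAmeas : MeasurableSet A := by
    refine measurableSet_le ?_ measurable_const
    exact (((measurable_const.mul (Finset.measurable_sum Finset.univ fun i _ => hmeas i)).sub
      measurable_const)).abs
  have hsubset : Aᶜ ⊆ {ω | (N:ℝ) * (μ + t) ≤ (∑ i, X i) ω} ∪ {ω | (∑ i, X i) ω ≤ (N:ℝ) * (μ - t)} := by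
    intro ω hω
    simp only [hA_def, Set.mem_compl_iff, Set.mem_setOf_eq, not_le] at hω
    have hsum : (∑ i, X i) ω = ∑ i, X i ω := Finset.sum_apply _ _ _
    rcases lt_or_ge ((1 / N : ℝ) * ∑ i, X i ω - μ) 0 with hneg | hpos
    · right
      rw [Set.mem_setOf_eq, hsum]
      rw [abs_of_neg hneg] at hω
      have : (1 / N : ℝ) * ∑ i, X i ω < μ - t := by rw [ht_def]; linarith
      calc (∑ i, X i ω) = (N:ℝ) * ((1 / N : ℝ) * ∑ i, X i ω) := by field_simp
        _ ≤ (N:ℝ) * (μ - t) := by nlinarith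
    · left
      rw [Set.mem_setOf_eq, hsum]
      rw [abs_of_nonneg hpos] at hω
      have : μ + t < (1 / N : ℝ) * ∑ i, X i ω := by rw [ht_def]; linarith
      calc (N:ℝ) * (μ + t) ≤ (N:ℝ) * ((1 / N : ℝ) * ∑ i, X i ω) := by nlinarith
        _ = ∑ i, X i ω := by field_simp
  have hcompl : (ℙ Aᶜ).toReal ≤ 2 * Real.exp (-E) := by
    have h1 : ℙ Aᶜ ≤ ℙ {ω | (N:ℝ) * (μ + t) ≤ (∑ i, X i) ω} + ℙ {ω | (∑ i, X i) ω ≤ (N:ℝ) * (μ - t)} :=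
      le_trans (measure_mono hsubset) (measure_union_le _ _)
    have h2 := ENNReal.toReal_mono
      (ENNReal.add_ne_top.mpr ⟨measure_ne_top _ _, measure_ne_top _ _⟩) h1
    rw [ENNReal.toReal_add (measure_ne_top _ _) (measure_ne_top _ _)] at h2
    linarith
  have hA1 : 1 - 4 * Real.exp (-E) ≤ (ℙ A).toReal := by
    have h0 := prob_compl_eq_one_sub hAmeas (μ := ℙ)
    have h1 : (ℙ Aᶜ).toReal = 1 - (ℙ A).toReal := by
      rw [h0, ENNReal.toReal_sub_of_le prob_le_one ENNReal.one_ne_top]; simp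
    have h2 : 0 < Real.exp (-E) := Real.exp_pos _
    linarith [hcompl, h1 ▸ hcompl]
  have hEeq : -(1/2 * (N:ℝ) * α * ε' / a) = -E := by rw [hE_def]
  rw [hEeq]
  calc ENNReal.ofReal (1 - 4 * Real.exp (-E)) ≤ ENNReal.ofReal ((ℙ A).toReal) :=
        ENNReal.ofReal_le_ofReal hA1
    _ = ℙ A := ENNReal.ofReal_toReal (measure_ne_top _ _)
end

section
/- Let M ∈ ℂ^{N×N} with ‖M‖_∞ = 1, let 0 < η ≤ ε be sufficiently small, set t = log₂(1/η), r = log₂(1/ε²), and γ = η/(2t). For any multiset Q ⊆ [N] and any x ∈ ℂ^N with ‖x‖₁ = 1, there exist nonnegative vectors h^{(1)},...,h^{(t)} ∈ ℝ^N with 0 ≤ h^{(i)}_j ≤ 9·2^{-i} for all i, j, such that both E_{j∈Q}[|(Mx)_j|²] and E_{j∈[N]}[|(Mx)_j|²] lie within multiplicative factor 1±O(ε) and additive error O(η) of E_{j∈Q}[∑_{i=1}^t h^{(i)}_j] and E_{j∈[N]}[∑_{i=1}^t h^{(i)}_j], respectively, where the h^{(i)} come from a set H_i of cardinality at most N^{O(ε^{-2}·2^i·log(1/γ))}.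 -/
open Real

open Finset

noncomputable def hrval (A : ℕ → ℝ) (i : ℕ) : ℝ :=
  if 2 * Real.sqrt ((1/2) ^ i) ≤ A i ∧
      ∀ i' ∈ Finset.Icc 1 (i - 1), A i' < 2 * Real.sqrt ((1/2) ^ i')
  then min ((A i) ^ 2) (9 * (1/2) ^ i) else 0

lemma hrval_nonneg (A : ℕ → ℝ) (i : ℕ) : 0 ≤ hrval A i := by
  unfold hrval
  split
  · exact le_min (sq_nonneg _) (by positivity)
  · exact le_refl 0

lemma hrval_le (A : ℕ → ℝ) (i : ℕ) : hrval A i ≤ 9 * (1/2) ^ i := by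
  unfold hrval
  split
  · exact min_le_right _ _
  · positivity

lemma hr_geom (t : ℕ) : ∑ i ∈ Finset.Icc 1 t, ((1:ℝ)/2) ^ i = 1 - (1/2)^t := by
  induction t with
  | zero => simp
  | succ n ih =>
      rw [Finset.sum_Icc_succ_top (by omega), ih]
      ring

set_option maxHeartbeats 2000000 in
lemma hr_det_pointwise (t : ℕ) (ht : 1 ≤ t) (ε η : ℝ) (hε0 : 0 < ε) (hε1 : ε ≤ 1/100)
    (hηt : ((1:ℝ)/2) ^ t ≤ η)
    (Y : ℝ) (hY0 : 0 ≤ Y) (A D : ℕ → ℝ)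
    (hA : ∀ i ∈ Finset.Icc 1 t, 0 ≤ A i ∧ A i ≤ 2)
    (hD : ∀ i ∈ Finset.Icc 1 t, |A i - Y| ≤ D i) :
    |Y ^ 2 - ∑ i ∈ Finset.Icc 1 t, hrval A i| ≤
      3 * ε * Y ^ 2 + 9 * η +
        10 * (Y ^ 2 + 1) *
          ∑ i ∈ Finset.Icc 1 t, (if ε * Real.sqrt ((1/2) ^ i) ≤ D i then (1:ℝ) else 0) := by
  have hsqpos : ∀ i : ℕ, 0 < Real.sqrt ((1/2) ^ i) :=
    fun i => Real.sqrt_pos.2 (by positivity)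
  have hsqsq : ∀ i : ℕ, Real.sqrt ((1/2) ^ i) ^ 2 = (1/2) ^ i :=
    fun i => Real.sq_sqrt (by positivity)
  have hη0 : 0 < η := lt_of_lt_of_le (by positivity) hηt
  have hind_nonneg : (0:ℝ) ≤ ∑ i ∈ Finset.Icc 1 t,
      (if ε * Real.sqrt ((1/2) ^ i) ≤ D i then (1:ℝ) else 0) := by
    refine Finset.sum_nonneg fun i _ => ?_
    split <;> norm_num
  have hterm_nonneg : (0:ℝ) ≤ 10 * (Y ^ 2 + 1) *
      ∑ i ∈ Finset.Icc 1 t, (if ε * Real.sqrt ((1/2) ^ i) ≤ D i then (1:ℝ) else 0) :=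
    mul_nonneg (by positivity) hind_nonneg
  have hS_nonneg : 0 ≤ ∑ i ∈ Finset.Icc 1 t, hrval A i :=
    Finset.sum_nonneg fun i _ => hrval_nonneg A i
  by_cases hbad : ∃ i ∈ Finset.Icc 1 t, ε * Real.sqrt ((1/2) ^ i) ≤ D i
  · obtain ⟨i₁, hi₁, hDi₁⟩ := hbad
    have hone : (1:ℝ) ≤ ∑ i ∈ Finset.Icc 1 t,
        (if ε * Real.sqrt ((1/2) ^ i) ≤ D i then (1:ℝ) else 0) := by
      have h := Finset.single_le_sum (s := Finset.Icc 1 t)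
        (f := fun i => if ε * Real.sqrt ((1/2) ^ i) ≤ D i then (1:ℝ) else 0)
        (fun i _ => by split <;> norm_num) hi₁
      rwa [if_pos hDi₁] at h
    have hS_le : ∑ i ∈ Finset.Icc 1 t, hrval A i ≤ 9 := by
      calc ∑ i ∈ Finset.Icc 1 t, hrval A i ≤ ∑ i ∈ Finset.Icc 1 t, 9 * ((1:ℝ)/2) ^ i :=
            Finset.sum_le_sum fun i _ => hrval_le A i
        _ = 9 * (1 - (1/2)^t) := by rw [← Finset.mul_sum, hr_geom]
        _ ≤ 9 := by nlinarith [pow_pos (by norm_num : (0:ℝ) < 1/2) t]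
    have habs : |Y ^ 2 - ∑ i ∈ Finset.Icc 1 t, hrval A i| ≤ Y ^ 2 + 9 := by
      rw [abs_le]; constructor <;> nlinarith
    have hstep : 10 * (Y ^ 2 + 1) * 1 ≤ 10 * (Y ^ 2 + 1) *
        ∑ i ∈ Finset.Icc 1 t, (if ε * Real.sqrt ((1/2) ^ i) ≤ D i then (1:ℝ) else 0) :=
      mul_le_mul_of_nonneg_left hone (by positivity)
    have h3 : 0 ≤ 3 * ε * Y ^ 2 := by positivity
    nlinarith [sq_nonneg Y]
  · push_neg at hbad
    by_cases hex : ∃ i₀ ∈ Finset.Icc 1 t, 2 * Real.sqrt ((1/2) ^ i₀) ≤ A i₀ ∧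
        ∀ i' ∈ Finset.Icc 1 (i₀ - 1), A i' < 2 * Real.sqrt ((1/2) ^ i')
    · obtain ⟨i₀, hi₀mem, hcond⟩ := hex
      obtain ⟨hi₀1, hi₀t⟩ := Finset.mem_Icc.1 hi₀mem
      have ha0 := (hA i₀ hi₀mem).1
      have ha2 := (hA i₀ hi₀mem).2
      have huniq : ∀ b ∈ Finset.Icc 1 t, b ≠ i₀ → hrval A b = 0 := by
        intro b hb hbne
        obtain ⟨hb1, hbt⟩ := Finset.mem_Icc.1 hb
        unfold hrval
        rw [if_neg]
        rintro ⟨hc1, hc2⟩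
        rcases lt_or_gt_of_ne hbne with hlt | hgt
        · exact absurd hc1 (not_le.2 (hcond.2 b (Finset.mem_Icc.2 ⟨hb1, by omega⟩)))
        · exact absurd hcond.1 (not_le.2 (hc2 i₀ (Finset.mem_Icc.2 ⟨hi₀1, by omega⟩)))
      have hsum : ∑ i ∈ Finset.Icc 1 t, hrval A i = hrval A i₀ :=
        Finset.sum_eq_single_of_mem i₀ hi₀mem huniq
      have h1 : |A i₀ - Y| < ε * Real.sqrt ((1/2) ^ i₀) :=
        lt_of_le_of_lt (hD _ hi₀mem) (hbad _ hi₀mem)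
      have h1' := abs_lt.1 h1
      have hYge : (2 - ε) * Real.sqrt ((1/2) ^ i₀) ≤ Y := by linarith [hcond.1]
      have hsqY : Real.sqrt ((1/2) ^ i₀) ≤ Y := by
        have hh : 0 ≤ (1 - ε) * Real.sqrt ((1/2) ^ i₀) :=
          mul_nonneg (by linarith) (hsqpos i₀).le
        nlinarith
      have haup : A i₀ ≤ 3 * Real.sqrt ((1/2) ^ i₀) := by
        rcases eq_or_lt_of_le hi₀1 with h1eq | h1lt
        · have h2 : Real.sqrt ((1/2) ^ i₀) ^ 2 = (1/2:ℝ) := by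
            rw [hsqsq, ← h1eq]; norm_num
          nlinarith [hsqpos i₀]
        · have hmem' : i₀ - 1 ∈ Finset.Icc 1 t := Finset.mem_Icc.2 ⟨by omega, by omega⟩
          have hA' : A (i₀ - 1) < 2 * Real.sqrt ((1/2) ^ (i₀ - 1)) :=
            hcond.2 (i₀ - 1) (Finset.mem_Icc.2 ⟨by omega, le_refl _⟩)
          have hD'' := abs_lt.1 (lt_of_le_of_lt (hD _ hmem') (hbad _ hmem'))
          have hpredpow : ((1:ℝ)/2) ^ (i₀ - 1) = 2 * (1/2) ^ i₀ := by
            have key : ((1:ℝ)/2) ^ (i₀ - 1) * (1/2) = (1/2) ^ i₀ := by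
              rw [← pow_succ]
              congr 1
              omega
            linarith
          have hpred : Real.sqrt ((1/2) ^ (i₀ - 1)) =
              Real.sqrt 2 * Real.sqrt ((1/2) ^ i₀) := by
            rw [hpredpow, Real.sqrt_mul (by norm_num)]
          have hrt2 : Real.sqrt 2 ≤ 1.415 := by
            rw [show (1.415:ℝ) = Real.sqrt (1.415 ^ 2) from (Real.sqrt_sq (by norm_num)).symm]
            exact Real.sqrt_le_sqrt (by norm_num)
          have hrt2' : (1:ℝ) ≤ Real.sqrt 2 := by
            rw [show (1:ℝ) = Real.sqrt 1 from (Real.sqrt_one).symm]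
            exact Real.sqrt_le_sqrt (by norm_num)
          -- Y < (2+ε) * sqrt((1/2)^(i₀-1)) ≤ 2.01 * 1.415 * sq i₀
          have hYup : Y < (2 + ε) * (Real.sqrt 2 * Real.sqrt ((1/2) ^ i₀)) := by
            rw [← hpred]
            have := hsqpos (i₀ - 1)
            nlinarith
          have hstep : (2 + ε) * (Real.sqrt 2 * Real.sqrt ((1/2) ^ i₀)) ≤
              2.01 * (1.415 * Real.sqrt ((1/2) ^ i₀)) := by
            have h2e : (2 + ε) ≤ 2.01 := by linarith
            refine mul_le_mul h2e ?_ (by positivity) (by norm_num)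
            exact mul_le_mul_of_nonneg_right hrt2 (hsqpos i₀).le
          have heps : ε * Real.sqrt ((1/2) ^ i₀) ≤ (1/100) * Real.sqrt ((1/2) ^ i₀) :=
            mul_le_mul_of_nonneg_right hε1 (hsqpos i₀).le
          linarith [h1'.2]
      have hcap : A i₀ ^ 2 ≤ 9 * (1/2) ^ i₀ := by
        have h9 : A i₀ ^ 2 ≤ (3 * Real.sqrt ((1/2) ^ i₀)) ^ 2 :=
          pow_le_pow_left₀ ha0 haup 2
        have h9' : (3 * Real.sqrt ((1/2) ^ i₀)) ^ 2 = 9 * Real.sqrt ((1/2) ^ i₀) ^ 2 := by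
          ring
        rw [h9', hsqsq] at h9
        exact h9
      have hsval : hrval A i₀ = A i₀ ^ 2 := by
        unfold hrval
        rw [if_pos hcond, min_eq_left hcap]
      have habs' : |Y - A i₀| ≤ ε * Y := by
        rw [abs_sub_comm]
        refine le_trans h1.le (mul_le_mul_of_nonneg_left hsqY hε0.le)
      have h2 := abs_le.1 habs'
      have hYe0 : 0 ≤ Y - ε * Y := by nlinarith
      have hmain : |Y ^ 2 - A i₀ ^ 2| ≤ 3 * ε * Y ^ 2 := by
        have hlo : (Y - ε * Y) ^ 2 ≤ A i₀ ^ 2 := by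
          refine pow_le_pow_left₀ hYe0 (by linarith) 2
        have hhi : A i₀ ^ 2 ≤ (Y + ε * Y) ^ 2 := by
          refine pow_le_pow_left₀ ha0 (by linarith) 2
        have hεY : 0 ≤ ε * Y ^ 2 := mul_nonneg hε0.le (sq_nonneg Y)
        have hε2Y : 0 ≤ ε * ε * Y ^ 2 := mul_nonneg (mul_nonneg hε0.le hε0.le) (sq_nonneg Y)
        have hεsq : ε * ε ≤ ε := by nlinarith
        have hεsqY : ε * ε * Y ^ 2 ≤ ε * Y ^ 2 :=
          mul_le_mul_of_nonneg_right hεsq (sq_nonneg Y)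
        rw [abs_le]
        constructor
        · nlinarith [hhi]
        · nlinarith [hlo]
      rw [hsum, hsval]
      refine le_trans hmain ?_
      linarith
    · have hall : ∀ i ∈ Finset.Icc 1 t, A i < 2 * Real.sqrt ((1/2) ^ i) := by
        by_contra hc
        push_neg at hc
        obtain ⟨i₂, hi₂, hAi₂⟩ := hc
        have hFne : ((Finset.Icc 1 t).filter
            (fun i => 2 * Real.sqrt ((1/2) ^ i) ≤ A i)).Nonempty :=
          ⟨i₂, Finset.mem_filter.2 ⟨hi₂, hAi₂⟩⟩
        set F := (Finset.Icc 1 t).filter (fun i => 2 * Real.sqrt ((1/2) ^ i) ≤ A i) with hF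
        have hi₀F : F.min' hFne ∈ F := F.min'_mem hFne
        obtain ⟨hi₀mem, hAi₀⟩ := Finset.mem_filter.1 hi₀F
        refine hex ⟨F.min' hFne, hi₀mem, hAi₀, ?_⟩
        intro i' hi'
        by_contra hni
        push_neg at hni
        obtain ⟨h1', h2'⟩ := Finset.mem_Icc.1 hi'
        obtain ⟨hm1, hm2⟩ := Finset.mem_Icc.1 hi₀mem
        have hi'F : i' ∈ F := Finset.mem_filter.2 ⟨Finset.mem_Icc.2 ⟨h1', by omega⟩, hni⟩
        have := F.min'_le i' hi'F
        omega
      have hsum0 : ∑ i ∈ Finset.Icc 1 t, hrval A i = 0 := by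
        refine Finset.sum_eq_zero fun i hi => ?_
        unfold hrval
        rw [if_neg]
        rintro ⟨hc1, _⟩
        exact absurd hc1 (not_le.2 (hall i hi))
      have htmem : t ∈ Finset.Icc 1 t := Finset.mem_Icc.2 ⟨ht, le_refl t⟩
      have hAt := hall t htmem
      have hDt' := abs_lt.1 (lt_of_le_of_lt (hD t htmem) (hbad t htmem))
      have hYt : Y < 3 * Real.sqrt ((1/2) ^ t) := by
        have heps : ε * Real.sqrt ((1/2) ^ t) ≤ (1/100) * Real.sqrt ((1/2) ^ t) :=
          mul_le_mul_of_nonneg_right hε1 (hsqpos t).le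
        linarith [hDt'.1]
      have hY9 : Y ^ 2 ≤ 9 * η := by
        have hq : Y ^ 2 ≤ (3 * Real.sqrt ((1/2) ^ t)) ^ 2 :=
          pow_le_pow_left₀ hY0 hYt.le 2
        have hq' : (3 * Real.sqrt ((1/2) ^ t)) ^ 2 = 9 * Real.sqrt ((1/2) ^ t) ^ 2 := by ring
        rw [hq', hsqsq] at hq
        linarith
      rw [hsum0, sub_zero, abs_of_nonneg (sq_nonneg Y)]
      have h3 : 0 ≤ 3 * ε * Y ^ 2 := by positivity
      linarith
/-- choose a point below the weighted average -/
lemma hr_exists_le_weighted {α : Type*} [Fintype α] (W F : α → ℝ)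
    (h0 : ∀ a, 0 ≤ W a) (h1 : ∑ a, W a = 1) {c : ℝ}
    (hE : ∑ a, W a * F a ≤ c) : ∃ a, F a ≤ c := by
  by_contra hcon
  push_neg at hcon
  have hex : ∃ a : α, 0 < W a := by
    by_contra hz
    push_neg at hz
    have hzz : ∑ a : α, W a = 0 := Finset.sum_eq_zero fun a _ => le_antisymm (hz a) (h0 a)
    rw [hzz] at h1; norm_num at h1
  obtain ⟨a0, ha0⟩ := hex
  have hpos : 0 < ∑ a, W a * (F a - c) := by
    refine Finset.sum_pos' (fun a _ => mul_nonneg (h0 a) (by linarith [hcon a]))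
      ⟨a0, Finset.mem_univ a0, mul_pos ha0 (by linarith [hcon a0])⟩
  have heq : ∑ a, W a * (F a - c) = (∑ a, W a * F a) - c := by
    simp [mul_sub, Finset.sum_sub_distrib, ← Finset.sum_mul, h1]
  rw [heq] at hpos
  linarith

lemma hrval_congr {A A' : ℕ → ℝ} (i : ℕ) (h1 : A i = A' i)
    (h2 : ∀ i' ∈ Finset.Icc 1 (i-1), A i' = A' i') : hrval A i = hrval A' i := by
  unfold hrval
  rw [h1]
  have hiff : (∀ i' ∈ Finset.Icc 1 (i - 1), A i' < 2 * Real.sqrt ((1/2) ^ i')) ↔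
      (∀ i' ∈ Finset.Icc 1 (i - 1), A' i' < 2 * Real.sqrt ((1/2) ^ i')) := by
    constructor <;> intro hh i' hi' <;> [rw [← h2 i' hi']; rw [h2 i' hi']] <;> exact hh i' hi'
  exact if_congr (and_congr Iff.rfl hiff) rfl rfl


lemma hr_exp_quad {x : ℝ} (h : |x| ≤ 1) : Real.exp x ≤ 1 + x + x ^ 2 := by
  have h2 := Real.exp_bound h (n := 2) (by norm_num)
  have hs : ∑ m ∈ Finset.range 2, x ^ m / (m.factorial : ℝ) = 1 + x := by
    simp [Finset.sum_range_succ]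
  rw [hs] at h2
  have h3 := (abs_le.1 h2).2
  norm_num [Nat.factorial] at h3
  nlinarith [sq_abs x, sq_nonneg x]

section Chernoff
variable {α : Type*} [Fintype α]

lemma hr_mgf (q : α → ℝ) (k : ℕ) (f : α → ℝ) :
    ∑ ω : Fin k → α, (∏ s, q (ω s)) * Real.exp (∑ s, f (ω s))
      = (∑ a, q a * Real.exp (f a)) ^ k := by
  have h := Finset.prod_univ_sum (fun _ : Fin k => (Finset.univ : Finset α))
    (fun _ a => q a * Real.exp (f a))
  rw [Fintype.piFinset_univ, Finset.prod_const, Finset.card_univ, Fintype.card_fin] at h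
  rw [h]
  refine Finset.sum_congr rfl fun ω _ => ?_
  rw [Real.exp_sum, ← Finset.prod_mul_distrib]

lemma hr_sum_W (q : α → ℝ) (k : ℕ) :
    ∑ ω : Fin k → α, (∏ s, q (ω s)) = (∑ a, q a) ^ k := by
  have h := hr_mgf q k 0
  simpa using h

lemma hr_chernoff_one (q : α → ℝ) (hq0 : ∀ a, 0 ≤ q a) (hq1 : ∑ a, q a = 1)
    (k : ℕ) (hk : 1 ≤ k) (ζ : α → ℝ) (hb : ∀ a, |ζ a| ≤ 2)
    (hc : ∑ a, q a * ζ a = 0) (b : ℝ) (hb0 : 0 ≤ b) (hbk : b ≤ 3 * k) :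
    ∑ ω : Fin k → α, (∏ s, q (ω s)) * (if b ≤ ∑ s, ζ (ω s) then (1:ℝ) else 0)
      ≤ Real.exp (-(b ^ 2) / (16 * k)) := by
  have hk0 : (0:ℝ) < k := by exact_mod_cast hk
  set lm : ℝ := b / (8 * k) with hlm
  have hlm0 : 0 ≤ lm := by positivity
  have hlmh : lm ≤ 1/2 := by
    rw [hlm, div_le_iff₀ (by positivity)]
    linarith
  have hW0 : ∀ ω : Fin k → α, 0 ≤ ∏ s, q (ω s) :=
    fun ω => Finset.prod_nonneg fun s _ => hq0 (ω s)
  have hpt : ∀ ω : Fin k → α,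
      (if b ≤ ∑ s, ζ (ω s) then (1:ℝ) else 0) ≤
        Real.exp (-(lm * b)) * Real.exp (∑ s, lm * ζ (ω s)) := by
    intro ω
    rw [← Real.exp_add]
    split
    · rename_i hcond
      rw [← Finset.mul_sum]
      refine Real.one_le_exp ?_
      nlinarith
    · positivity
  have hstep1 : ∑ ω : Fin k → α, (∏ s, q (ω s)) * (if b ≤ ∑ s, ζ (ω s) then (1:ℝ) else 0)
      ≤ Real.exp (-(lm * b)) * ∑ ω : Fin k → α, (∏ s, q (ω s)) *
          Real.exp (∑ s, lm * ζ (ω s)) := by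
    rw [Finset.mul_sum]
    refine Finset.sum_le_sum fun ω _ => ?_
    calc (∏ s, q (ω s)) * (if b ≤ ∑ s, ζ (ω s) then (1:ℝ) else 0)
        ≤ (∏ s, q (ω s)) * (Real.exp (-(lm * b)) * Real.exp (∑ s, lm * ζ (ω s))) :=
          mul_le_mul_of_nonneg_left (hpt ω) (hW0 ω)
      _ = Real.exp (-(lm * b)) * ((∏ s, q (ω s)) * Real.exp (∑ s, lm * ζ (ω s))) := by ring
  have hatom : ∑ a, q a * Real.exp (lm * ζ a) ≤ 1 + 4 * lm ^ 2 := by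
    have h1 : ∀ a, q a * Real.exp (lm * ζ a) ≤ q a * (1 + lm * ζ a + 4 * lm ^ 2) := by
      intro a
      refine mul_le_mul_of_nonneg_left ?_ (hq0 a)
      have habs : |lm * ζ a| ≤ 1 := by
        rw [abs_mul, abs_of_nonneg hlm0]
        calc lm * |ζ a| ≤ (1/2) * 2 := by
              refine mul_le_mul hlmh (hb a) (abs_nonneg _) (by norm_num)
          _ = 1 := by norm_num
      refine le_trans (hr_exp_quad habs) ?_
      have : (lm * ζ a) ^ 2 ≤ 4 * lm ^ 2 := by
        have h2 : ζ a ^ 2 ≤ 4 := by nlinarith [abs_le.1 (hb a), abs_nonneg (ζ a)]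
        have := sq_nonneg lm
        nlinarith
      linarith
    calc ∑ a, q a * Real.exp (lm * ζ a) ≤ ∑ a, q a * (1 + lm * ζ a + 4 * lm ^ 2) :=
          Finset.sum_le_sum fun a _ => h1 a
      _ = ∑ a, (q a + lm * (q a * ζ a) + 4 * lm ^ 2 * q a) :=
          Finset.sum_congr rfl fun a _ => by ring
      _ = (∑ a, q a) + lm * (∑ a, q a * ζ a) + 4 * lm ^ 2 * (∑ a, q a) := by
          rw [Finset.sum_add_distrib, Finset.sum_add_distrib, ← Finset.mul_sum,
            ← Finset.mul_sum]
      _ = 1 + 4 * lm ^ 2 := by rw [hq1, hc]; ring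
  have hmgf := hr_mgf q k (fun a => lm * ζ a)
  have hpow : (∑ a, q a * Real.exp (lm * ζ a)) ^ k ≤ Real.exp (4 * k * lm ^ 2) := by
    have hnn : (0:ℝ) ≤ ∑ a, q a * Real.exp (lm * ζ a) :=
      Finset.sum_nonneg fun a _ => mul_nonneg (hq0 a) (Real.exp_pos _).le
    calc (∑ a, q a * Real.exp (lm * ζ a)) ^ k ≤ (1 + 4 * lm ^ 2) ^ k :=
          pow_le_pow_left₀ hnn hatom k
      _ ≤ (Real.exp (4 * lm ^ 2)) ^ k := by
          refine pow_le_pow_left₀ (by positivity) ?_ k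
          linarith [Real.add_one_le_exp (4 * lm ^ 2)]
      _ = Real.exp (4 * k * lm ^ 2) := by
          rw [← Real.exp_nat_mul]
          ring_nf
  calc ∑ ω : Fin k → α, (∏ s, q (ω s)) * (if b ≤ ∑ s, ζ (ω s) then (1:ℝ) else 0)
      ≤ Real.exp (-(lm * b)) * ∑ ω : Fin k → α, (∏ s, q (ω s)) *
          Real.exp (∑ s, lm * ζ (ω s)) := hstep1
    _ = Real.exp (-(lm * b)) * (∑ a, q a * Real.exp (lm * ζ a)) ^ k := by rw [hmgf]
    _ ≤ Real.exp (-(lm * b)) * Real.exp (4 * k * lm ^ 2) := by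
        refine mul_le_mul_of_nonneg_left hpow (Real.exp_pos _).le
    _ = Real.exp (-(lm * b) + 4 * k * lm ^ 2) := by rw [← Real.exp_add]
    _ ≤ Real.exp (-(b ^ 2) / (16 * k)) := by
        refine Real.exp_le_exp.2 ?_
        rw [hlm]
        field_simp
        nlinarith [sq_nonneg b, hk0]


lemma hr_chernoff_complex (q : α → ℝ) (hq0 : ∀ a, 0 ≤ q a) (hq1 : ∑ a, q a = 1)
    (k : ℕ) (hk : 1 ≤ k) (Z : α → ℂ) (hZ : ∀ a, norm (Z a) ≤ 1)
    (σ : ℝ) (hσ0 : 0 < σ) (hσ1 : σ ≤ 1) :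
    ∑ ω : Fin k → α, (∏ s, q (ω s)) *
        (if σ ≤ norm ((k : ℂ)⁻¹ * (∑ s, Z (ω s)) - ∑ a, (q a : ℂ) * Z a)
         then (1:ℝ) else 0)
      ≤ 4 * Real.exp (-(k * σ ^ 2) / 64) := by
  classical
  have hk0 : (0:ℝ) < k := by exact_mod_cast hk
  have hkc : ((k:ℂ)) ≠ 0 := by
    exact_mod_cast Nat.cast_ne_zero.2 (by omega)
  set u : ℂ := ∑ a, (q a : ℂ) * Z a with hu
  have hu1 : norm u ≤ 1 := by
    calc norm u ≤ ∑ a, norm ((q a : ℂ) * Z a) :=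
          norm_sum_le _ _
      _ ≤ ∑ a, q a := by
          refine Finset.sum_le_sum fun a _ => ?_
          rw [norm_mul, Complex.norm_real, Real.norm_eq_abs, abs_of_nonneg (hq0 a)]
          calc q a * norm (Z a) ≤ q a * 1 :=
                mul_le_mul_of_nonneg_left (hZ a) (hq0 a)
            _ = q a := mul_one _
      _ = 1 := hq1
  have hZu2 : ∀ a, norm (Z a - u) ≤ 2 := by
    intro a
    have h := norm_sub_le (Z a) u
    linarith [hZ a]
  have hcenter : ∑ a, (q a : ℂ) * (Z a - u) = 0 := by
    have hqc : (∑ a, (q a : ℂ)) = 1 := by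
      rw [← Complex.ofReal_sum, hq1, Complex.ofReal_one]
    calc ∑ a, (q a : ℂ) * (Z a - u) = (∑ a, (q a : ℂ) * Z a) - (∑ a, (q a : ℂ)) * u := by
          rw [Finset.sum_mul, ← Finset.sum_sub_distrib]
          refine Finset.sum_congr rfl fun a _ => by ring
      _ = 0 := by rw [← hu, hqc, one_mul, sub_self]
  have hcR : ∑ a, q a * (Z a - u).re = 0 := by
    have h := congrArg Complex.re hcenter
    rw [Complex.re_sum] at h
    simpa [Complex.mul_re, Complex.ofReal_re, Complex.ofReal_im] using h
  have hcI : ∑ a, q a * (Z a - u).im = 0 := by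
    have h := congrArg Complex.im hcenter
    rw [Complex.im_sum] at h
    simpa [Complex.mul_im, Complex.ofReal_re, Complex.ofReal_im] using h
  have hbR : ∀ a, |(Z a - u).re| ≤ 2 :=
    fun a => le_trans (Complex.abs_re_le_norm _) (hZu2 a)
  have hbI : ∀ a, |(Z a - u).im| ≤ 2 :=
    fun a => le_trans (Complex.abs_im_le_norm _) (hZu2 a)
  set B : ℝ := k * σ / 2 with hB
  have hB0 : 0 ≤ B := by positivity
  have hB3 : B ≤ 3 * k := by
    rw [hB]
    nlinarith
  -- pointwise indicator bound
  have hpt : ∀ ω : Fin k → α,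
      (if σ ≤ norm ((k : ℂ)⁻¹ * (∑ s, Z (ω s)) - u) then (1:ℝ) else 0) ≤
        (if B ≤ ∑ s, (Z (ω s) - u).re then (1:ℝ) else 0) +
        (if B ≤ ∑ s, -((Z (ω s) - u).re) then (1:ℝ) else 0) +
        ((if B ≤ ∑ s, (Z (ω s) - u).im then (1:ℝ) else 0) +
        (if B ≤ ∑ s, -((Z (ω s) - u).im) then (1:ℝ) else 0)) := by
    intro ω
    by_cases hcond : σ ≤ norm ((k : ℂ)⁻¹ * (∑ s, Z (ω s)) - u)
    · rw [if_pos hcond]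
      set S : ℂ := ∑ s, (Z (ω s) - u) with hS
      have hgu : (k : ℂ)⁻¹ * (∑ s, Z (ω s)) - u = (k:ℂ)⁻¹ * S := by
        rw [hS, Finset.sum_sub_distrib, Finset.sum_const, Finset.card_univ,
          Fintype.card_fin, nsmul_eq_mul]
        field_simp
      have habsS : norm ((k:ℂ)⁻¹ * S) = ((k:ℝ))⁻¹ * norm S := by
        rw [norm_mul, norm_inv, Complex.norm_natCast]
      rw [hgu, habsS] at hcond
      have h1 : (k:ℝ) * σ ≤ norm S := by
        have h := mul_le_mul_of_nonneg_left hcond hk0.le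
        rw [← mul_assoc, mul_inv_cancel₀ (ne_of_gt hk0), one_mul] at h
        exact h
      have h2 : ((k:ℝ) * σ) ^ 2 ≤ (S.re) ^ 2 + (S.im) ^ 2 := by
        have hsq : norm S ^ 2 = S.re ^ 2 + S.im ^ 2 := by
          rw [Complex.sq_norm, Complex.normSq_apply]
          ring
        have := pow_le_pow_left₀ (by positivity) h1 2
        rw [hsq] at this
        exact this
      have hdisj : B ≤ |S.re| ∨ B ≤ |S.im| := by
        by_contra hno
        push_neg at hno
        have e1 : S.re ^ 2 < B ^ 2 := by
          have := abs_nonneg (S.re)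
          nlinarith [sq_abs S.re, hno.1]
        have e2 : S.im ^ 2 < B ^ 2 := by
          have := abs_nonneg (S.im)
          nlinarith [sq_abs S.im, hno.2]
        rw [hB] at e1 e2
        nlinarith [mul_pos hk0 hσ0]
      have hSre : S.re = ∑ s, (Z (ω s) - u).re := by
        rw [hS, Complex.re_sum]
      have hSim : S.im = ∑ s, (Z (ω s) - u).im := by
        rw [hS, Complex.im_sum]
      have hnonneg : ∀ (c : Prop) [Decidable c], (0:ℝ) ≤ if c then (1:ℝ) else 0 := by
        intro c _
        split <;> norm_num
      have hle : ∀ (c : Prop) [Decidable c], c → (1:ℝ) ≤ (if c then (1:ℝ) else 0) := by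
        intro c _ hc
        rw [if_pos hc]
      have n1 := hnonneg (B ≤ ∑ s, (Z (ω s) - u).re)
      have n2 := hnonneg (B ≤ ∑ s, -((Z (ω s) - u).re))
      have n3 := hnonneg (B ≤ ∑ s, (Z (ω s) - u).im)
      have n4 := hnonneg (B ≤ ∑ s, -((Z (ω s) - u).im))
      rcases hdisj with hre | him
      · rcases le_abs.1 hre with hp | hn
        · have := hle _ (show B ≤ ∑ s, (Z (ω s) - u).re by rw [← hSre]; exact hp)
          linarith
        · have := hle _ (show B ≤ ∑ s, -((Z (ω s) - u).re) by
            rw [Finset.sum_neg_distrib, ← hSre]; exact hn)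
          linarith
      · rcases le_abs.1 him with hp | hn
        · have := hle _ (show B ≤ ∑ s, (Z (ω s) - u).im by rw [← hSim]; exact hp)
          linarith
        · have := hle _ (show B ≤ ∑ s, -((Z (ω s) - u).im) by
            rw [Finset.sum_neg_distrib, ← hSim]; exact hn)
          linarith
    · rw [if_neg hcond]
      have hnonneg : ∀ (c : Prop) [Decidable c], (0:ℝ) ≤ if c then (1:ℝ) else 0 := by
        intro c _
        split <;> norm_num
      have h1 := hnonneg (B ≤ ∑ s, (Z (ω s) - u).re)
      have h2 := hnonneg (B ≤ ∑ s, -((Z (ω s) - u).re))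
      have h3 := hnonneg (B ≤ ∑ s, (Z (ω s) - u).im)
      have h4 := hnonneg (B ≤ ∑ s, -((Z (ω s) - u).im))
      linarith
  have hW0 : ∀ ω : Fin k → α, 0 ≤ ∏ s, q (ω s) :=
    fun ω => Finset.prod_nonneg fun s _ => hq0 (ω s)
  have hC1 := hr_chernoff_one q hq0 hq1 k hk (fun a => (Z a - u).re) hbR hcR B hB0 hB3
  have hC2 := hr_chernoff_one q hq0 hq1 k hk (fun a => -((Z a - u).re))
    (fun a => by rw [abs_neg]; exact hbR a)
    (by simp only [mul_neg, Finset.sum_neg_distrib, hcR, neg_zero]) B hB0 hB3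
  have hC3 := hr_chernoff_one q hq0 hq1 k hk (fun a => (Z a - u).im) hbI hcI B hB0 hB3
  have hC4 := hr_chernoff_one q hq0 hq1 k hk (fun a => -((Z a - u).im))
    (fun a => by rw [abs_neg]; exact hbI a)
    (by simp only [mul_neg, Finset.sum_neg_distrib, hcI, neg_zero]) B hB0 hB3
  have hBexp : Real.exp (-(B ^ 2) / (16 * k)) = Real.exp (-(k * σ ^ 2) / 64) := by
    congr 1
    rw [hB]
    field_simp
    ring
  calc ∑ ω : Fin k → α, (∏ s, q (ω s)) *
        (if σ ≤ norm ((k : ℂ)⁻¹ * (∑ s, Z (ω s)) - u) then (1:ℝ) else 0)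
      ≤ ∑ ω : Fin k → α, ((∏ s, q (ω s)) *
          (if B ≤ ∑ s, (Z (ω s) - u).re then (1:ℝ) else 0) +
        ((∏ s, q (ω s)) * (if B ≤ ∑ s, -((Z (ω s) - u).re) then (1:ℝ) else 0) +
        ((∏ s, q (ω s)) * (if B ≤ ∑ s, (Z (ω s) - u).im then (1:ℝ) else 0) +
        (∏ s, q (ω s)) * (if B ≤ ∑ s, -((Z (ω s) - u).im) then (1:ℝ) else 0)))) := by
        refine Finset.sum_le_sum fun ω _ => ?_
        have h := mul_le_mul_of_nonneg_left (hpt ω) (hW0 ω)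
        calc (∏ s, q (ω s)) *
            (if σ ≤ norm ((k : ℂ)⁻¹ * (∑ s, Z (ω s)) - u) then (1:ℝ) else 0)
            ≤ _ := h
          _ = _ := by ring
    _ = (∑ ω : Fin k → α, (∏ s, q (ω s)) *
          (if B ≤ ∑ s, (Z (ω s) - u).re then (1:ℝ) else 0)) +
        ((∑ ω : Fin k → α, (∏ s, q (ω s)) *
          (if B ≤ ∑ s, -((Z (ω s) - u).re) then (1:ℝ) else 0)) +
        ((∑ ω : Fin k → α, (∏ s, q (ω s)) *
          (if B ≤ ∑ s, (Z (ω s) - u).im then (1:ℝ) else 0)) +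
        (∑ ω : Fin k → α, (∏ s, q (ω s)) *
          (if B ≤ ∑ s, -((Z (ω s) - u).im) then (1:ℝ) else 0)))) := by
        rw [Finset.sum_add_distrib, Finset.sum_add_distrib, Finset.sum_add_distrib]
    _ ≤ Real.exp (-(B ^ 2) / (16 * k)) + (Real.exp (-(B ^ 2) / (16 * k)) +
        (Real.exp (-(B ^ 2) / (16 * k)) + Real.exp (-(B ^ 2) / (16 * k)))) := by
        gcongr
    _ = 4 * Real.exp (-(B ^ 2) / (16 * k)) := by ring
    _ = 4 * Real.exp (-(k * σ ^ 2) / 64) := by rw [hBexp]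


end Chernoff


noncomputable def hrpha : Fin 4 → ℂ :=
  fun c => if c = 0 then 1 else if c = 1 then -1 else if c = 2 then Complex.I else -Complex.I

noncomputable def hrK (ε L : ℝ) (n : ℕ) : ℕ := ⌈(3000:ℝ) * ε⁻¹ ^ 2 * 2 ^ n * L⌉₊

noncomputable def hrM (γ : ℝ) : ℕ := ⌈1 / (2 * γ ^ 3)⌉₊ + 1

abbrev hrTheta (N : ℕ) (ε L γ : ℝ) (n : ℕ) : Type :=
  (Fin (hrK ε L n) → Fin N × Fin 4) × Fin (hrM γ)

noncomputable def hrtg (γ : ℝ) {m : ℕ} (b : Fin m) : ℝ := 1 + b * γ ^ 3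

noncomputable def hrnet {N : ℕ} (M : Matrix (Fin N) (Fin N) ℂ) (ε L γ : ℝ) (n : ℕ)
    (θ : hrTheta N ε L γ n) (j : Fin N) : ℂ :=
  (hrtg γ θ.2 : ℂ) * ((hrK ε L n : ℕ) : ℂ)⁻¹ * ∑ s, hrpha (θ.1 s).2 * M j (θ.1 s).1

abbrev hrTup (N : ℕ) (ε L γ : ℝ) (i : ℕ) : Type := ∀ i' : Fin i, hrTheta N ε L γ (i'.1 + 1)

noncomputable def hrGof {N : ℕ} (M : Matrix (Fin N) (Fin N) ℂ) (ε L γ : ℝ) (i : ℕ)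
    (τ : hrTup N ε L γ i) (i'' : ℕ) : Fin N → ℂ :=
  if h : 1 ≤ i'' ∧ i'' ≤ i then hrnet M ε L γ (i'' - 1 + 1) (τ ⟨i'' - 1, by omega⟩) else 0

noncomputable def hrH {N : ℕ} (M : Matrix (Fin N) (Fin N) ℂ) (ε L γ : ℝ) (i : ℕ) :
    Finset (Fin N → ℝ) :=
  Finset.image
    (fun τ : hrTup N ε L γ i =>
      fun j => hrval (fun i'' => norm (hrGof M ε L γ i τ i'' j)) i)
    Finset.univ

lemma hrK_pos (ε L : ℝ) (hε : 0 < ε) (hL : 0 < L) (n : ℕ) : 1 ≤ hrK ε L n := by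
  have : (0:ℝ) < 3000 * ε⁻¹ ^ 2 * 2 ^ n * L := by positivity
  exact Nat.one_le_iff_ne_zero.2 (by
    intro h
    have := Nat.ceil_eq_zero.1 h
    linarith)

set_option maxHeartbeats 3000000 in
lemma hr_card {N : ℕ} (hN2 : 2 ≤ N) (M : Matrix (Fin N) (Fin N) ℂ)
    (ε γ L : ℝ) (hε0 : 0 < ε) (hε1 : ε ≤ 1/100)
    (hγ0 : 0 < γ) (hγ1 : γ ≤ 1/200) (hL : L = Real.log (1/γ))
    (i : ℕ) :
    ((hrH M ε L γ i).card : ℝ) ≤ (N : ℝ) ^ ((20000:ℝ) * ε⁻¹ ^ 2 * 2 ^ i * L) := by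
  classical
  have hL2 : Real.log 2 ≤ L := by
    rw [hL]
    apply Real.log_le_log (by norm_num)
    rw [le_one_div (by norm_num) hγ0]
    linarith
  have hL0 : 0 < L := lt_of_lt_of_le (Real.log_pos (by norm_num)) hL2
  have hlogN : Real.log 2 ≤ Real.log N :=
    Real.log_le_log (by norm_num) (by exact_mod_cast hN2)
  have hlogN0 : 0 < Real.log N := lt_of_lt_of_le (Real.log_pos (by norm_num)) hlogN
  have hinv1 : (1:ℝ) ≤ ε⁻¹ ^ 2 := by
    have h100 : (100:ℝ) ≤ ε⁻¹ := by
      rw [le_inv_comm₀ (by norm_num) hε0]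
      linarith
    nlinarith
  -- card bound by the tuple count
  have hcard1 : ((hrH M ε L γ i).card : ℝ) ≤ (Fintype.card (hrTup N ε L γ i) : ℝ) := by
    unfold hrH
    exact_mod_cast le_trans Finset.card_image_le (le_of_eq Finset.card_univ)
  -- compute card of the tuple type
  have hcard2 : (Fintype.card (hrTup N ε L γ i) : ℝ) =
      ∏ i' : Fin i, ((N * 4) ^ (hrK ε L (i'.1 + 1)) * hrM γ : ℕ) := by
    rw [Fintype.card_pi]
    push_cast
    refine Finset.prod_congr rfl fun i' _ => ?_
    rw [Fintype.card_prod, Fintype.card_fun, Fintype.card_prod, Fintype.card_fin,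
      Fintype.card_fin, Fintype.card_fin]
    push_cast [Fintype.card_fin]
    ring
  have hlog2num : (0.6931471803:ℝ) < Real.log 2 := Real.log_two_gt_d9
  have hinv4 : (10000:ℝ) ≤ ε⁻¹ ^ 2 := by
    have h100 : (100:ℝ) ≤ ε⁻¹ := by
      rw [le_inv_comm₀ (by norm_num) hε0]
      linarith
    nlinarith
  -- per-factor bound
  have hfac : ∀ n : ℕ, (((N * 4) ^ (hrK ε L n) * hrM γ : ℕ) : ℝ) ≤
      Real.exp (3001 * ε⁻¹ ^ 2 * 2 ^ n * L * (3 * Real.log N) + 5 * (L * Real.log N)) := by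
    intro n
    push_cast
    rw [Real.exp_add]
    have hx : (0:ℝ) < (N:ℝ) * 4 := by positivity
    refine mul_le_mul ?_ ?_ (by positivity) (Real.exp_pos _).le
    · rw [← Real.exp_log (pow_pos hx _), Real.log_pow]
      apply Real.exp_le_exp.2
      have hlog4N : Real.log ((N:ℝ) * 4) ≤ 3 * Real.log N := by
        rw [Real.log_mul (by positivity) (by norm_num)]
        have h4 : Real.log 4 ≤ 2 * Real.log N := by
          rw [show (4:ℝ) = 2 ^ 2 by norm_num, Real.log_pow]
          push_cast
          nlinarith
        linarith
      have hlog4N0 : 0 ≤ Real.log ((N:ℝ) * 4) := by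
        refine Real.log_nonneg ?_
        have : (2:ℝ) ≤ N := by exact_mod_cast hN2
        nlinarith
      have hA1 : (1:ℝ) ≤ ε⁻¹ ^ 2 * 2 ^ n * L := by
        have h2n : (1:ℝ) ≤ 2 ^ n := one_le_pow₀ (by norm_num)
        have e1 : (10000:ℝ) ≤ ε⁻¹ ^ 2 * 2 ^ n := by nlinarith
        calc (1:ℝ) ≤ 10000 * Real.log 2 := by nlinarith
          _ ≤ (ε⁻¹ ^ 2 * 2 ^ n) * L :=
              mul_le_mul e1 hL2 (by nlinarith) (by linarith)
      have hkb : (hrK ε L n : ℝ) ≤ 3001 * ε⁻¹ ^ 2 * 2 ^ n * L := by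
        have h := Nat.ceil_lt_add_one
          (show (0:ℝ) ≤ 3000 * ε⁻¹ ^ 2 * 2 ^ n * L by positivity)
        unfold hrK
        nlinarith [hA1]
      calc (hrK ε L n : ℝ) * Real.log ((N:ℝ) * 4)
          ≤ (3001 * ε⁻¹ ^ 2 * 2 ^ n * L) * (3 * Real.log N) :=
            mul_le_mul hkb hlog4N hlog4N0 (by positivity)
        _ = 3001 * ε⁻¹ ^ 2 * 2 ^ n * L * (3 * Real.log N) := by ring
    · have hγ3 : (0:ℝ) < γ ^ 3 := by positivity
      have hm : (hrM γ : ℝ) ≤ 1 / γ ^ 3 := by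
        unfold hrM
        push_cast
        have h1 := Nat.ceil_lt_add_one (show (0:ℝ) ≤ 1 / (2 * γ ^ 3) by positivity)
        have h2 : (2:ℝ) ≤ 1 / (2 * γ ^ 3) := by
          rw [le_div_iff₀ (by positivity)]
          nlinarith [pow_le_pow_left₀ hγ0.le hγ1 3]
        have h3 : 1 / (2 * γ ^ 3) + 1 / (2 * γ ^ 3) = 1 / γ ^ 3 := by
          field_simp
          ring
        nlinarith
      have hexp : (1:ℝ) / γ ^ 3 = Real.exp (3 * L) := by
        rw [hL]
        have : (1:ℝ) / γ ^ 3 = (1 / γ) ^ 3 := by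
          field_simp
        rw [this, ← Real.exp_log (show (0:ℝ) < (1/γ)^3 by positivity), Real.log_pow]
        push_cast
        ring_nf
      refine le_trans hm ?_
      rw [hexp]
      apply Real.exp_le_exp.2
      -- 3L ≤ 5 L log N
      have : (3:ℝ)/5 ≤ Real.log N := by linarith
      nlinarith
  calc ((hrH M ε L γ i).card : ℝ)
      ≤ (Fintype.card (hrTup N ε L γ i) : ℝ) := hcard1
    _ = ∏ i' : Fin i, (((N * 4) ^ (hrK ε L (i'.1 + 1)) * hrM γ : ℕ) : ℝ) := by
        rw [hcard2]
        push_cast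
        rfl
    _ ≤ ∏ i' : Fin i, Real.exp (3001 * ε⁻¹ ^ 2 * 2 ^ (i'.1 + 1) * L * (3 * Real.log N)
          + 5 * (L * Real.log N)) :=
        Finset.prod_le_prod (fun i' _ => by positivity) (fun i' _ => hfac (i'.1 + 1))
    _ = Real.exp (∑ i' : Fin i, (3001 * ε⁻¹ ^ 2 * 2 ^ (i'.1 + 1) * L * (3 * Real.log N)
          + 5 * (L * Real.log N))) := by
        rw [Real.exp_sum]
    _ ≤ Real.exp (Real.log N * (20000 * ε⁻¹ ^ 2 * 2 ^ i * L)) := by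
        apply Real.exp_le_exp.2
        have h1 : ∑ i' : Fin i, (3001 * ε⁻¹ ^ 2 * 2 ^ (i'.1 + 1) * L * (3 * Real.log N)
              + 5 * (L * Real.log N))
            = (3001 * ε⁻¹ ^ 2 * L * (3 * Real.log N)) * (∑ i' : Fin i, (2:ℝ) ^ (i'.1 + 1))
              + (i : ℝ) * (5 * (L * Real.log N)) := by
          rw [Finset.sum_add_distrib, Finset.sum_const, Finset.card_univ, Fintype.card_fin,
            nsmul_eq_mul, Finset.mul_sum]
          congr 1
          exact Finset.sum_congr rfl fun i' _ => by ring
        have h2 : ∑ i' : Fin i, (2:ℝ) ^ (i'.1 + 1) = 2 * ((2:ℝ) ^ i - 1) := by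
          rw [Fin.sum_univ_eq_sum_range (fun n => (2:ℝ) ^ (n + 1))]
          have : ∀ n ∈ Finset.range i, (2:ℝ) ^ (n + 1) = 2 * 2 ^ n := fun n _ => by ring
          rw [Finset.sum_congr rfl this, ← Finset.mul_sum, geom_sum_eq (by norm_num)]
          norm_num
        rw [h1, h2]
        have hi2 : (i:ℝ) ≤ (2:ℝ) ^ i := by
          have := Nat.lt_two_pow_self (n := i)
          exact_mod_cast this.le
        have hLN0 : 0 ≤ L * Real.log N := mul_nonneg hL0.le hlogN0.le
        have h2i1 : (1:ℝ) ≤ (2:ℝ) ^ i := one_le_pow₀ (by norm_num)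
        have hh1 : (i:ℝ) * (L * Real.log N) ≤ (2:ℝ) ^ i * (L * Real.log N) :=
          mul_le_mul_of_nonneg_right hi2 hLN0
        have hh2 : (2:ℝ) ^ i * (L * Real.log N) ≤ ε⁻¹ ^ 2 * (2:ℝ) ^ i * (L * Real.log N) := by
          nlinarith [mul_nonneg (pow_nonneg (by norm_num : (0:ℝ) ≤ 2) i) hLN0]
        have hh3 : 0 ≤ ε⁻¹ ^ 2 * (L * Real.log N) := by positivity
        nlinarith [mul_nonneg (mul_nonneg (by positivity : (0:ℝ) ≤ ε⁻¹ ^ 2 * L * Real.log N)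
          (by norm_num : (0:ℝ) ≤ 1)) (le_of_lt hlogN0)]
    _ = (N : ℝ) ^ ((20000:ℝ) * ε⁻¹ ^ 2 * 2 ^ i * L) := by
        rw [Real.rpow_def_of_pos (by positivity : (0:ℝ) < (N:ℝ))]

lemma hrpha_abs (c : Fin 4) : norm (hrpha c) = 1 := by
  unfold hrpha
  fin_cases c <;> simp

noncomputable def hrpt (x : ℂ) : Fin 4 → ℝ :=
  fun c => if c = 0 then max x.re 0 else if c = 1 then max (-x.re) 0
    else if c = 2 then max x.im 0 else max (-x.im) 0

lemma hrpt_nonneg (x : ℂ) (c : Fin 4) : 0 ≤ hrpt x c := by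
  unfold hrpt
  split
  · exact le_max_right _ _
  · split
    · exact le_max_right _ _
    · split
      · exact le_max_right _ _
      · exact le_max_right _ _

lemma hrpt_sum (x : ℂ) : ∑ c, hrpt x c = |x.re| + |x.im| := by
  rw [Fin.sum_univ_four]
  have e0 : hrpt x 0 = max x.re 0 := by norm_num [hrpt]
  have e1 : hrpt x 1 = max (-x.re) 0 := by norm_num [hrpt, Fin.ext_iff]
  have e2 : hrpt x 2 = max x.im 0 := by norm_num [hrpt, Fin.ext_iff]
  have e3 : hrpt x 3 = max (-x.im) 0 := by
    unfold hrpt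
    rw [if_neg (by decide), if_neg (by decide), if_neg (by decide)]
  rw [e0, e1, e2, e3]
  have h1 := max_zero_add_max_neg_zero_eq_abs_self x.re
  have h2 := max_zero_add_max_neg_zero_eq_abs_self x.im
  linarith

lemma hrpt_mul (x w : ℂ) : ∑ c, (hrpt x c : ℂ) * (hrpha c * w) = x * w := by
  rw [Fin.sum_univ_four]
  have e0 : hrpt x 0 = max x.re 0 := by norm_num [hrpt]
  have e1 : hrpt x 1 = max (-x.re) 0 := by norm_num [hrpt, Fin.ext_iff]
  have e2 : hrpt x 2 = max x.im 0 := by norm_num [hrpt, Fin.ext_iff]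
  have e3 : hrpt x 3 = max (-x.im) 0 := by
    unfold hrpt
    rw [if_neg (by decide), if_neg (by decide), if_neg (by decide)]
  have p0 : hrpha 0 = 1 := by norm_num [hrpha]
  have p1 : hrpha 1 = -1 := by norm_num [hrpha, Fin.ext_iff]
  have p2 : hrpha 2 = Complex.I := by norm_num [hrpha, Fin.ext_iff]
  have p3 : hrpha 3 = -Complex.I := by
    unfold hrpha
    rw [if_neg (by decide), if_neg (by decide), if_neg (by decide)]
  rw [e0, e1, e2, e3, p0, p1, p2, p3]
  have hre : ((max x.re 0 : ℝ) : ℂ) - ((max (-x.re) 0 : ℝ) : ℂ) = (x.re : ℂ) := by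
    rw [← Complex.ofReal_sub]
    exact_mod_cast congrArg Complex.ofReal (max_zero_sub_max_neg_zero_eq_self x.re)
  have him : ((max x.im 0 : ℝ) : ℂ) - ((max (-x.im) 0 : ℝ) : ℂ) = (x.im : ℂ) := by
    rw [← Complex.ofReal_sub]
    exact_mod_cast congrArg Complex.ofReal (max_zero_sub_max_neg_zero_eq_self x.im)
  have hx := Complex.re_add_im x
  calc ((max x.re 0 : ℝ) : ℂ) * (1 * w) + ((max (-x.re) 0 : ℝ) : ℂ) * (-1 * w)
        + ((max x.im 0 : ℝ) : ℂ) * (Complex.I * w) + ((max (-x.im) 0 : ℝ) : ℂ) * (-Complex.I * w)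
      = ((((max x.re 0 : ℝ) : ℂ) - ((max (-x.re) 0 : ℝ) : ℂ))
          + (((max x.im 0 : ℝ) : ℂ) - ((max (-x.im) 0 : ℝ) : ℂ)) * Complex.I) * w := by ring
    _ = ((x.re : ℂ) + (x.im : ℂ) * Complex.I) * w := by rw [hre, him]
    _ = x * w := by rw [hx]

lemma hr_reim (z : ℂ) : |z.re| + |z.im| ≤ 3/2 * norm z := by
  have h1 : (|z.re| + |z.im|) ^ 2 ≤ 2 * norm z ^ 2 := by
    rw [Complex.sq_norm, Complex.normSq_apply]
    nlinarith [sq_abs z.re, sq_abs z.im, sq_nonneg (|z.re| - |z.im|)]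
  nlinarith [abs_nonneg z.re, abs_nonneg z.im, norm_nonneg z]

lemma hr_multiset_avg {N : ℕ} (Q : Multiset (Fin N)) (f : Fin N → ℝ) :
    (Q.map f).sum = ∑ j : Fin N, (Q.count j : ℝ) * f j := by
  classical
  rw [Finset.sum_multiset_map_count]
  rw [← Finset.sum_subset (Finset.subset_univ Q.toFinset) (fun j _ hj => ?_)]
  · refine Finset.sum_congr rfl fun j hj => ?_
    rw [nsmul_eq_mul]
  · rw [Multiset.count_eq_zero_of_notMem (by simpa using hj), Nat.cast_zero, zero_mul]

lemma hr_count_sum {N : ℕ} (Q : Multiset (Fin N)) :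
    ∑ j : Fin N, (Q.count j : ℝ) = Q.card := by
  have h := hr_multiset_avg Q (fun _ => (1:ℝ))
  simp only [mul_one] at h
  rw [← h]
  simp

lemma hr_icc {V S ε η : ℝ} (hV0 : 0 ≤ V) (hS0 : 0 ≤ S) (hε0 : 0 < ε) (hε1 : ε ≤ 1/100)
    (hη0 : 0 < η) (habs : |V - S| ≤ 3 * ε * V + 14 * η) :
    (1 - 4 * ε) * S - 15 * η ≤ V ∧ V ≤ (1 + 4 * ε) * S + 15 * η := by
  have h := abs_le.1 habs
  have hup : V ≤ (1 + 4 * ε) * S + 15 * η := by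
    have h13 : (0:ℝ) < 1 - 3 * ε := by linarith
    have hV' : (1 - 3 * ε) * V ≤ S + 14 * η := by nlinarith [h.2]
    have hkey : S + 14 * η ≤ (1 - 3 * ε) * ((1 + 4 * ε) * S + 15 * η) := by
      have k1 : 0 ≤ (ε * S) * (1 - 12 * ε) :=
        mul_nonneg (mul_nonneg hε0.le hS0) (by linarith)
      have k2 : 0 ≤ η * (1 - 45 * ε) := mul_nonneg hη0.le (by linarith)
      nlinarith
    nlinarith [mul_le_mul_of_nonneg_left (le_refl V) h13.le]
  refine ⟨?_, hup⟩
  have hεV : ε * V ≤ ε * ((1 + 4 * ε) * S + 15 * η) := mul_le_mul_of_nonneg_left hup hε0.le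
  have k1 : 0 ≤ (ε * S) * (1 - 12 * ε) := mul_nonneg (mul_nonneg hε0.le hS0) (by linarith)
  have k2 : 0 ≤ η * (1 - 45 * ε) := mul_nonneg hη0.le (by linarith)
  nlinarith [h.1]

set_option maxHeartbeats 4000000 in
lemma hr_main {N : ℕ} (hN1 : 1 ≤ N) (M : Matrix (Fin N) (Fin N) ℂ)
    (hM : ∀ j l, norm (M j l) ≤ 1)
    (ε η : ℝ) (hη0 : 0 < η) (hηε : η ≤ ε) (hε1 : ε ≤ 1/100)
    (t : ℕ) (ht1 : 1 ≤ t) (hηt : ((1:ℝ)/2) ^ t ≤ η) (hηt2 : η/2 ≤ ((1:ℝ)/2) ^ t)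
    (γ : ℝ) (hγ : γ = η / (2 * t)) (L : ℝ) (hL : L = Real.log (1/γ))
    (Q : Multiset (Fin N)) (hQ : Q ≠ 0)
    (x : Fin N → ℂ) (hx : (∑ l, norm (x l)) = 1) :
    ∃ h : ℕ → Fin N → ℝ,
      (∀ i ∈ Finset.Icc 1 t, h i ∈ (↑(hrH M ε L γ i) : Set (Fin N → ℝ)) ∧
        ∀ j, 0 ≤ h i j ∧ h i j ≤ 9 / 2 ^ i) ∧
      ((1 / Q.card : ℝ) * (Q.map (fun j => norm (M.mulVec x j) ^ 2)).sum ∈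
        Set.Icc
          ((1 - 4 * ε) * ((1 / Q.card : ℝ) *
            (Q.map (fun j => ∑ i ∈ Finset.Icc 1 t, h i j)).sum) - 15 * η)
          ((1 + 4 * ε) * ((1 / Q.card : ℝ) *
            (Q.map (fun j => ∑ i ∈ Finset.Icc 1 t, h i j)).sum) + 15 * η)) ∧
      ((1 / N : ℝ) * ∑ j, norm (M.mulVec x j) ^ 2 ∈
        Set.Icc
          ((1 - 4 * ε) * ((1 / N : ℝ) * ∑ j, ∑ i ∈ Finset.Icc 1 t, h i j) - 15 * η)
          ((1 + 4 * ε) * ((1 / N : ℝ) * ∑ j, ∑ i ∈ Finset.Icc 1 t, h i j) + 15 * η)) := by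
  classical
  have hε0 : 0 < ε := lt_of_lt_of_le hη0 hηε
  have hη1 : η ≤ 1/100 := le_trans hηε hε1
  have ht0 : (0:ℝ) < t := by exact_mod_cast Nat.lt_of_lt_of_le Nat.zero_lt_one ht1
  have ht1' : (1:ℝ) ≤ t := by exact_mod_cast ht1
  have hγ0 : 0 < γ := by rw [hγ]; positivity
  have hγhalf : γ ≤ η / 2 := by
    rw [hγ]
    exact div_le_div_of_nonneg_left hη0.le (by norm_num) (by linarith)
  have hγ200 : γ ≤ 1/200 := le_trans hγhalf (by linarith)
  have hL2 : Real.log 2 ≤ L := by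
    rw [hL]
    apply Real.log_le_log (by norm_num)
    rw [le_one_div (by norm_num) hγ0]
    linarith
  have hL0 : 0 < L := lt_of_lt_of_le (Real.log_pos (by norm_num)) hL2
  have hexp5 : Real.exp (-(5 * L)) = γ ^ 5 := by
    rw [hL, one_div, Real.log_inv]
    rw [show -(5 * -Real.log γ) = Real.log (γ ^ 5) by rw [Real.log_pow]; push_cast; ring]
    exact Real.exp_log (by positivity)
  -- the total mass T
  set T : ℝ := ∑ l, (|(x l).re| + |(x l).im|) with hT
  have hT1 : 1 ≤ T := by
    rw [← hx, hT]
    exact Finset.sum_le_sum fun l _ => Complex.norm_le_abs_re_add_abs_im (x l)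
  have hT32 : T ≤ 3/2 := by
    rw [hT]
    calc ∑ l, (|(x l).re| + |(x l).im|) ≤ ∑ l, 3/2 * norm (x l) :=
          Finset.sum_le_sum fun l _ => hr_reim (x l)
      _ = 3/2 := by rw [← Finset.mul_sum, hx, mul_one]
  have hT0 : (0:ℝ) < T := by linarith
  -- weights on the index set
  set q : Fin N × Fin 4 → ℝ := fun a => hrpt (x a.1) a.2 / T with hq
  have hq0 : ∀ a, 0 ≤ q a := fun a => div_nonneg (hrpt_nonneg _ _) hT0.le
  have hq1 : ∑ a, q a = 1 := by
    rw [hq, Fintype.sum_prod_type]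
    have : ∀ l : Fin N, ∑ c, hrpt (x l) c / T = (|(x l).re| + |(x l).im|) / T := by
      intro l
      rw [← Finset.sum_div, hrpt_sum]
    rw [Finset.sum_congr rfl fun l _ => this l, ← Finset.sum_div, ← hT, div_self hT0.ne']
  -- the vector y and its normalization u
  set y : Fin N → ℂ := M.mulVec x with hy
  have hyd : ∀ j, y j = ∑ l, M j l * x l := fun j => rfl
  have hyle : ∀ j, norm (y j) ≤ 1 := by
    intro j
    rw [hyd]
    calc norm (∑ l, M j l * x l) ≤ ∑ l, norm (M j l * x l) :=
          norm_sum_le _ _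
      _ ≤ ∑ l, norm (x l) := by
          refine Finset.sum_le_sum fun l _ => ?_
          rw [norm_mul]
          calc norm (M j l) * norm (x l) ≤ 1 * norm (x l) :=
                mul_le_mul_of_nonneg_right (hM j l) (norm_nonneg _)
            _ = norm (x l) := one_mul _
      _ = 1 := hx
  set Z : Fin N → (Fin N × Fin 4) → ℂ := fun j a => hrpha a.2 * M j a.1 with hZ
  have hZ1 : ∀ j a, norm (Z j a) ≤ 1 := by
    intro j a
    rw [hZ]
    calc norm (hrpha a.2 * M j a.1) = norm (M j a.1) := by
          rw [norm_mul, hrpha_abs, one_mul]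
      _ ≤ 1 := hM j a.1
  set u : Fin N → ℂ := fun j => ∑ a, (q a : ℂ) * Z j a with hu
  have hTu : ∀ j, (T : ℂ) * u j = y j := by
    intro j
    rw [hu]
    calc (T:ℂ) * ∑ a, (q a : ℂ) * Z j a = ∑ a, (hrpt (x a.1) a.2 : ℂ) * Z j a := by
          rw [Finset.mul_sum]
          refine Finset.sum_congr rfl fun a _ => ?_
          rw [hq]
          push_cast
          have : (T:ℂ) ≠ 0 := by exact_mod_cast hT0.ne'
          field_simp
      _ = ∑ l, ∑ c, (hrpt (x l) c : ℂ) * (hrpha c * M j l) := by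
          rw [Fintype.sum_prod_type]
      _ = ∑ l, x l * M j l := Finset.sum_congr rfl fun l _ => hrpt_mul (x l) (M j l)
      _ = y j := by
          rw [hyd]
          exact Finset.sum_congr rfl fun l _ => mul_comm _ _
  have hu1 : ∀ j, norm (u j) ≤ 1 := by
    intro j
    have h := congrArg norm (hTu j)
    rw [norm_mul, Complex.norm_real, Real.norm_eq_abs, abs_of_pos hT0] at h
    nlinarith [hyle j, norm_nonneg (u j)]
  -- grid point for T
  have hγ3 : (0:ℝ) < γ ^ 3 := by positivity
  have hbTlt : ⌊(T - 1) / γ ^ 3⌋₊ < hrM γ := by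
    have h1 : (T - 1) / γ ^ 3 ≤ 1 / (2 * γ ^ 3) := by
      rw [div_le_div_iff₀ hγ3 (by positivity)]
      nlinarith
    calc ⌊(T - 1) / γ ^ 3⌋₊ ≤ ⌊1 / (2 * γ ^ 3)⌋₊ := Nat.floor_le_floor h1
      _ ≤ ⌈1 / (2 * γ ^ 3)⌉₊ := Nat.floor_le_ceil _
      _ < hrM γ := by unfold hrM; omega
  set bT : Fin (hrM γ) := ⟨⌊(T - 1) / γ ^ 3⌋₊, hbTlt⟩ with hbT
  have htgb1 : hrtg γ bT ≤ T := by
    unfold hrtg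
    have h1 : (⌊(T - 1) / γ ^ 3⌋₊ : ℝ) ≤ (T - 1) / γ ^ 3 :=
      Nat.floor_le (div_nonneg (by linarith) hγ3.le)
    have h2 : (⌊(T - 1) / γ ^ 3⌋₊ : ℝ) * γ ^ 3 ≤ T - 1 := (le_div_iff₀ hγ3).1 h1
    simp only [hbT]
    linarith
  have htgb2 : T - γ ^ 3 ≤ hrtg γ bT := by
    unfold hrtg
    have h1 : (T - 1) / γ ^ 3 < (⌊(T - 1) / γ ^ 3⌋₊ : ℝ) + 1 :=
      Nat.lt_floor_add_one _
    have h2 : T - 1 < ((⌊(T - 1) / γ ^ 3⌋₊ : ℝ) + 1) * γ ^ 3 := by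
      rw [← div_lt_iff₀ hγ3]
      exact h1
    have := hγ3
    simp only [hbT]
    nlinarith
  have htgb3 : (1:ℝ) ≤ hrtg γ bT := by
    unfold hrtg
    have : (0:ℝ) ≤ (bT : ℝ) * γ ^ 3 := by positivity
    linarith
  have htgb4 : hrtg γ bT ≤ 2 := by
    have : γ ^ 3 ≤ 1 := by nlinarith [pow_le_pow_left₀ hγ0.le hγ200 3]
    linarith [htgb1]
  -- per scale selection of the sample
  have hNempty : Nonempty (Fin N × Fin 4) := ⟨⟨⟨0, by omega⟩, 0⟩⟩
  have hsel : ∀ i : ℕ, ∃ θ : hrTheta N ε L γ i, θ.2 = bT ∧ (i ∈ Finset.Icc 1 t →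
      ∑ j, ((Q.count j : ℝ) / Q.card + 1 / N) * (norm (y j) ^ 2 + 1) *
        (if ε * Real.sqrt ((1/2) ^ i) / 3 ≤
            norm (((hrK ε L i : ℕ) : ℂ)⁻¹ * (∑ s, Z j (θ.1 s)) - u j)
         then (1:ℝ) else 0)
        ≤ 16 * γ ^ 5) := by
    intro i
    by_cases hi : i ∈ Finset.Icc 1 t
    · -- Chernoff bound for each coordinate
      set k := hrK ε L i with hk
      have hk1 : 1 ≤ k := hrK_pos ε L hε0 hL0 i
      set σ' : ℝ := ε * Real.sqrt ((1/2) ^ i) / 3 with hσ'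
      have hsqpos : 0 < Real.sqrt ((1/2) ^ i) := Real.sqrt_pos.2 (by positivity)
      have hsqle : Real.sqrt ((1/2) ^ i) ≤ 1 := by
        rw [show (1:ℝ) = Real.sqrt 1 from (Real.sqrt_one).symm]
        exact Real.sqrt_le_sqrt (pow_le_one₀ (by norm_num) (by norm_num))
      have hσ'0 : 0 < σ' := by rw [hσ']; positivity
      have hσ'1 : σ' ≤ 1 := by rw [hσ']; nlinarith
      have hcher : ∀ j, ∑ ω : Fin k → (Fin N × Fin 4), (∏ s, q (ω s)) *
          (if σ' ≤ norm (((k:ℕ):ℂ)⁻¹ * (∑ s, Z j (ω s)) - u j) then (1:ℝ) else 0)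
          ≤ 4 * Real.exp (-(k * σ' ^ 2) / 64) := by
        intro j
        have hcc := hr_chernoff_complex q hq0 hq1 k hk1 (Z j) (hZ1 j) σ' hσ'0 hσ'1
        simpa [hu] using hcc
      have hexpb : 4 * Real.exp (-(k * σ' ^ 2) / 64) ≤ 4 * γ ^ 5 := by
        rw [← hexp5]
        refine mul_le_mul_of_nonneg_left ?_ (by norm_num)
        refine Real.exp_le_exp.2 ?_
        have hklow : (3000:ℝ) * ε⁻¹ ^ 2 * 2 ^ i * L ≤ k := Nat.le_ceil _
        have hsq : Real.sqrt ((1/2) ^ i) ^ 2 = ((1:ℝ)/2) ^ i := Real.sq_sqrt (by positivity)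
        have hσ'sq : σ' ^ 2 = ε ^ 2 * (1/2) ^ i / 9 := by
          rw [hσ', div_pow, mul_pow, hsq]
          norm_num
        have h2i : (2:ℝ) ^ i * (1/2) ^ i = 1 := by
          rw [← mul_pow]
          norm_num
        have hεinv : ε⁻¹ ^ 2 * ε ^ 2 = 1 := by field_simp
        have hkey : (320:ℝ) * L ≤ (k:ℝ) * σ' ^ 2 := by
          have h1 : (3000:ℝ) * ε⁻¹ ^ 2 * 2 ^ i * L * (ε ^ 2 * (1/2) ^ i / 9) ≤
              (k:ℝ) * σ' ^ 2 := by
            rw [hσ'sq]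
            exact mul_le_mul_of_nonneg_right hklow (by positivity)
          have h2 : (3000:ℝ) * ε⁻¹ ^ 2 * 2 ^ i * L * (ε ^ 2 * (1/2) ^ i / 9)
              = 3000 / 9 * L * (ε⁻¹ ^ 2 * ε ^ 2) * ((2:ℝ) ^ i * (1/2) ^ i) := by ring
          rw [h2, hεinv, h2i] at h1
          nlinarith
        linarith
      have hQc0 : (0:ℝ) < Q.card := by exact_mod_cast Multiset.card_pos.2 hQ
      have hcw0 : ∀ j, (0:ℝ) ≤ ((Q.count j : ℝ) / Q.card + 1 / N) *
          (norm (y j) ^ 2 + 1) := fun j => mul_nonneg (by positivity) (by positivity)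
      have hcwsum : ∑ j, ((Q.count j : ℝ) / Q.card + 1 / N) *
          (norm (y j) ^ 2 + 1) ≤ 4 := by
        have hstep : ∀ j : Fin N, ((Q.count j : ℝ) / Q.card + 1 / N) *
            (norm (y j) ^ 2 + 1) ≤ ((Q.count j : ℝ) / Q.card + 1 / N) * 2 := by
          intro j
          refine mul_le_mul_of_nonneg_left ?_ (by positivity)
          nlinarith [hyle j, norm_nonneg (y j)]
        calc ∑ j, ((Q.count j : ℝ) / Q.card + 1 / N) * (norm (y j) ^ 2 + 1)
            ≤ ∑ j, ((Q.count j : ℝ) / Q.card + 1 / N) * 2 :=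
              Finset.sum_le_sum fun j _ => hstep j
          _ = (∑ j, (Q.count j : ℝ) / Q.card) * 2 + (∑ _j : Fin N, (1:ℝ)/N) * 2 := by
              rw [Finset.sum_mul, Finset.sum_mul, ← Finset.sum_add_distrib]
              exact Finset.sum_congr rfl fun j _ => by ring
          _ ≤ 4 := by
              have e1 : ∑ j, (Q.count j : ℝ) / Q.card = 1 := by
                rw [← Finset.sum_div, hr_count_sum, div_self hQc0.ne']
              have e2 : ∑ _j : Fin N, (1:ℝ)/N = 1 := by
                rw [Finset.sum_const, Finset.card_univ, Fintype.card_fin, nsmul_eq_mul]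
                field_simp
              rw [e1, e2]
              norm_num
      have hW0 : ∀ ω : Fin k → (Fin N × Fin 4), 0 ≤ ∏ s, q (ω s) :=
        fun ω => Finset.prod_nonneg fun s _ => hq0 (ω s)
      have hWsum : ∑ ω : Fin k → (Fin N × Fin 4), ∏ s, q (ω s) = 1 := by
        rw [hr_sum_W, hq1, one_pow]
      have hE : ∑ ω : Fin k → (Fin N × Fin 4), (∏ s, q (ω s)) *
          (∑ j, ((Q.count j : ℝ) / Q.card + 1 / N) * (norm (y j) ^ 2 + 1) *
            (if σ' ≤ norm (((k:ℕ):ℂ)⁻¹ * (∑ s, Z j (ω s)) - u j) then (1:ℝ) else 0))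
          ≤ 16 * γ ^ 5 := by
        have h1 : ∀ ω : Fin k → (Fin N × Fin 4), (∏ s, q (ω s)) *
            (∑ j, ((Q.count j : ℝ) / Q.card + 1 / N) * (norm (y j) ^ 2 + 1) *
              (if σ' ≤ norm (((k:ℕ):ℂ)⁻¹ * (∑ s, Z j (ω s)) - u j) then (1:ℝ) else 0))
            = ∑ j, ((Q.count j : ℝ) / Q.card + 1 / N) * (norm (y j) ^ 2 + 1) *
              ((∏ s, q (ω s)) *
              (if σ' ≤ norm (((k:ℕ):ℂ)⁻¹ * (∑ s, Z j (ω s)) - u j) then (1:ℝ) else 0)) := by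
          intro ω
          rw [Finset.mul_sum]
          exact Finset.sum_congr rfl fun j _ => by ring
        rw [Finset.sum_congr rfl fun ω _ => h1 ω, Finset.sum_comm]
        calc ∑ j, ∑ ω : Fin k → (Fin N × Fin 4),
              ((Q.count j : ℝ) / Q.card + 1 / N) * (norm (y j) ^ 2 + 1) *
              ((∏ s, q (ω s)) *
              (if σ' ≤ norm (((k:ℕ):ℂ)⁻¹ * (∑ s, Z j (ω s)) - u j) then (1:ℝ) else 0))
            = ∑ j, ((Q.count j : ℝ) / Q.card + 1 / N) * (norm (y j) ^ 2 + 1) *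
              (∑ ω : Fin k → (Fin N × Fin 4), (∏ s, q (ω s)) *
              (if σ' ≤ norm (((k:ℕ):ℂ)⁻¹ * (∑ s, Z j (ω s)) - u j) then (1:ℝ) else 0)) := by
              exact Finset.sum_congr rfl fun j _ => by rw [Finset.mul_sum]
          _ ≤ ∑ j, ((Q.count j : ℝ) / Q.card + 1 / N) * (norm (y j) ^ 2 + 1) *
              (4 * γ ^ 5) := by
              refine Finset.sum_le_sum fun j _ => ?_
              exact mul_le_mul_of_nonneg_left (le_trans (hcher j) hexpb) (hcw0 j)
          _ = (∑ j, ((Q.count j : ℝ) / Q.card + 1 / N) * (norm (y j) ^ 2 + 1))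
              * (4 * γ ^ 5) := by rw [Finset.sum_mul]
          _ ≤ 4 * (4 * γ ^ 5) := by
              refine mul_le_mul_of_nonneg_right hcwsum (by positivity)
          _ = 16 * γ ^ 5 := by ring
      obtain ⟨ω0, hω0⟩ := hr_exists_le_weighted
        (fun ω : Fin k → (Fin N × Fin 4) => ∏ s, q (ω s))
        (fun ω => ∑ j, ((Q.count j : ℝ) / Q.card + 1 / N) * (norm (y j) ^ 2 + 1) *
          (if σ' ≤ norm (((k:ℕ):ℂ)⁻¹ * (∑ s, Z j (ω s)) - u j) then (1:ℝ) else 0))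
        hW0 hWsum hE
      exact ⟨(ω0, bT), rfl, fun _ => hω0⟩
    · refine ⟨⟨fun _ => Classical.arbitrary _, bT⟩, rfl, fun h => absurd h hi⟩
  choose θsel hθsel2 hθselP using hsel
  set Gfam : ℕ → Fin N → ℂ := fun n => hrnet M ε L γ n (θsel n) with hGfam
  set hfun : ℕ → Fin N → ℝ :=
    (fun i j => hrval (fun i'' => norm (Gfam i'' j)) i) with hhfun
  have hk1n : ∀ n, 1 ≤ hrK ε L n := fun n => hrK_pos ε L hε0 hL0 n
  have hGabs : ∀ n j, norm (Gfam n j) ≤ 2 := by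
    intro n j
    have hkpos : (0:ℝ) < (hrK ε L n : ℝ) := by exact_mod_cast hk1n n
    show norm (hrnet M ε L γ n (θsel n) j) ≤ 2
    unfold hrnet
    rw [norm_mul, norm_mul, Complex.norm_real, Real.norm_eq_abs, norm_inv, Complex.norm_natCast]
    have h2 : norm (∑ s, hrpha ((θsel n).1 s).2 * M j ((θsel n).1 s).1)
        ≤ (hrK ε L n : ℝ) := by
      calc norm (∑ s, hrpha ((θsel n).1 s).2 * M j ((θsel n).1 s).1)
          ≤ ∑ s, norm (hrpha ((θsel n).1 s).2 * M j ((θsel n).1 s).1) :=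
            norm_sum_le _ _
        _ ≤ ∑ _s : Fin (hrK ε L n), (1:ℝ) := Finset.sum_le_sum fun s _ => by
            rw [norm_mul, hrpha_abs, one_mul]
            exact hM _ _
        _ = (hrK ε L n : ℝ) := by
            rw [Finset.sum_const, Finset.card_univ, Fintype.card_fin, nsmul_eq_mul, mul_one]
    have h3 : |hrtg γ (θsel n).2| ≤ 2 := by
      rw [hθsel2 n, abs_of_nonneg (by linarith [htgb3])]
      exact htgb4
    have h4 : ((hrK ε L n : ℝ))⁻¹ *
        norm (∑ s, hrpha ((θsel n).1 s).2 * M j ((θsel n).1 s).1) ≤ 1 := by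
      have hh := mul_le_mul_of_nonneg_left h2 (inv_nonneg.2 hkpos.le)
      rwa [inv_mul_cancel₀ hkpos.ne'] at hh
    calc |hrtg γ (θsel n).2| * ((hrK ε L n : ℝ))⁻¹ *
          norm (∑ s, hrpha ((θsel n).1 s).2 * M j ((θsel n).1 s).1)
        = |hrtg γ (θsel n).2| * (((hrK ε L n : ℝ))⁻¹ *
          norm (∑ s, hrpha ((θsel n).1 s).2 * M j ((θsel n).1 s).1)) := by ring
      _ ≤ 2 * 1 := mul_le_mul h3 h4 (by positivity) (by norm_num)
      _ = 2 := by norm_num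
  have hAj : ∀ j, ∀ i ∈ Finset.Icc 1 t,
      0 ≤ norm (Gfam i j) ∧ norm (Gfam i j) ≤ 2 :=
    fun j i _ => ⟨norm_nonneg _, hGabs i j⟩
  have hDj : ∀ j, ∀ i ∈ Finset.Icc 1 t,
      |norm (Gfam i j) - norm (y j)| ≤ norm (Gfam i j - y j) := by
    intro j i _
    have hh := abs_norm_sub_norm_le (Gfam i j) (y j)
    simpa using hh
  -- the net error is below the per-scale radius
  have hsqb : ∀ i ∈ Finset.Icc 1 t, γ ^ 3 ≤ ε * Real.sqrt ((1/2) ^ i) / 3 := by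
    intro i hi
    obtain ⟨_, hit⟩ := Finset.mem_Icc.1 hi
    have h1 : η / 2 ≤ Real.sqrt ((1/2) ^ t) := by
      rw [Real.le_sqrt (by linarith) (by positivity)]
      nlinarith
    have h2 : Real.sqrt ((1/2) ^ t) ≤ Real.sqrt ((1/2) ^ i) :=
      Real.sqrt_le_sqrt (pow_le_pow_of_le_one (by norm_num) (by norm_num) hit)
    have h3 : γ ^ 3 ≤ η ^ 3 / 8 := by nlinarith [pow_le_pow_left₀ hγ0.le hγhalf 3]
    have hη2 : η ^ 2 ≤ ε := by nlinarith [mul_le_mul_of_nonneg_left hη1 hη0.le]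
    have h4 : η ^ 3 / 8 ≤ ε * (η / 2) / 3 := by
      nlinarith [mul_le_mul_of_nonneg_right hη2 hη0.le]
    have h5 : ε * (η / 2) / 3 ≤ ε * Real.sqrt ((1/2) ^ i) / 3 := by
      have h6 := le_trans h1 h2
      nlinarith
    linarith
  have hbridge : ∀ i ∈ Finset.Icc 1 t, ∀ j,
      (if ε * Real.sqrt ((1/2) ^ i) ≤ norm (Gfam i j - y j) then (1:ℝ) else 0) ≤
      (if ε * Real.sqrt ((1/2) ^ i) / 3 ≤
          norm (((hrK ε L i : ℕ) : ℂ)⁻¹ * (∑ s, Z j ((θsel i).1 s)) - u j)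
       then (1:ℝ) else 0) := by
    intro i hi j
    by_cases hc : ε * Real.sqrt ((1/2) ^ i) / 3 ≤
        norm (((hrK ε L i : ℕ) : ℂ)⁻¹ * (∑ s, Z j ((θsel i).1 s)) - u j)
    · rw [if_pos hc]
      split <;> norm_num
    · rw [if_neg hc, if_neg ?hgoal]
      case hgoal =>
        push_neg at hc ⊢
        have hGi : Gfam i j = ((hrtg γ bT : ℝ) : ℂ) *
            (((hrK ε L i : ℕ) : ℂ)⁻¹ * (∑ s, Z j ((θsel i).1 s))) := by
          show hrnet M ε L γ i (θsel i) j = _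
          unfold hrnet
          rw [hθsel2 i, mul_assoc]
        have hyT : y j = (T : ℂ) * u j := (hTu j).symm
        set g : ℂ := ((hrK ε L i : ℕ) : ℂ)⁻¹ * (∑ s, Z j ((θsel i).1 s)) with hg
        have hsplit : Gfam i j - y j = ((hrtg γ bT : ℝ) : ℂ) * (g - u j)
            + (((hrtg γ bT - T : ℝ)) : ℂ) * u j := by
          rw [hGi, hyT]
          push_cast
          ring
        have habs2 : norm (Gfam i j - y j) ≤
            hrtg γ bT * norm (g - u j) + γ ^ 3 := by
          rw [hsplit]
          calc norm (((hrtg γ bT : ℝ) : ℂ) * (g - u j)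
                + (((hrtg γ bT - T : ℝ)) : ℂ) * u j)
              ≤ norm (((hrtg γ bT : ℝ) : ℂ) * (g - u j))
                + norm ((((hrtg γ bT - T : ℝ)) : ℂ) * u j) := norm_add_le _ _
            _ = |hrtg γ bT| * norm (g - u j)
                + |hrtg γ bT - T| * norm (u j) := by
                rw [norm_mul, norm_mul, Complex.norm_real, Real.norm_eq_abs, Complex.norm_real, Real.norm_eq_abs]
            _ ≤ hrtg γ bT * norm (g - u j) + γ ^ 3 * 1 := by
                have e1 : |hrtg γ bT| = hrtg γ bT := abs_of_nonneg (by linarith)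
                have e2 : |hrtg γ bT - T| ≤ γ ^ 3 := abs_le.2 ⟨by linarith, by linarith⟩
                rw [e1]
                refine add_le_add (le_refl _) ?_
                exact mul_le_mul e2 (hu1 j) (norm_nonneg _) (by positivity)
            _ = hrtg γ bT * norm (g - u j) + γ ^ 3 := by norm_num
        have h4 : hrtg γ bT * norm (g - u j) ≤ 2 * norm (g - u j) :=
          mul_le_mul_of_nonneg_right htgb4 (norm_nonneg _)
        have h5 := hsqb i hi
        calc norm (Gfam i j - y j)
            ≤ 2 * norm (g - u j) + γ ^ 3 := by linarith
          _ < 2 * (ε * Real.sqrt ((1/2) ^ i) / 3) + ε * Real.sqrt ((1/2) ^ i) / 3 := by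
              linarith
          _ ≤ ε * Real.sqrt ((1/2) ^ i) := by linarith
  -- aggregated comparison for any dominated weight
  have htγ : (t : ℝ) * γ = η / 2 := by
    rw [hγ]
    field_simp
  have hgamma5 : 160 * (t : ℝ) * γ ^ 5 ≤ 5 * η := by
    have h1 : (160:ℝ) * t * γ ^ 5 = 80 * η * γ ^ 4 := by
      have : (160:ℝ) * t * γ ^ 5 = 160 * ((t:ℝ) * γ) * γ ^ 4 := by ring
      rw [this, htγ]
      ring
    have h2 : γ ^ 4 ≤ (1/200:ℝ) ^ 4 := pow_le_pow_left₀ hγ0.le hγ200 4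
    rw [h1]
    nlinarith
  have hagg : ∀ w : Fin N → ℝ, (∀ j, 0 ≤ w j) → (∑ j, w j = 1) →
      (∀ j, w j ≤ (Q.count j : ℝ) / Q.card + 1 / N) →
      |(∑ j, w j * norm (y j) ^ 2)
          - ∑ j, w j * (∑ i ∈ Finset.Icc 1 t, hfun i j)| ≤
        3 * ε * (∑ j, w j * norm (y j) ^ 2) + 14 * η := by
    intro w hw0 hw1 hwle
    have hdet : ∀ j, |norm (y j) ^ 2 - ∑ i ∈ Finset.Icc 1 t, hfun i j| ≤
        3 * ε * norm (y j) ^ 2 + 9 * η + 10 * (norm (y j) ^ 2 + 1) *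
          ∑ i ∈ Finset.Icc 1 t,
            (if ε * Real.sqrt ((1/2) ^ i) ≤ norm (Gfam i j - y j)
             then (1:ℝ) else 0) := by
      intro j
      exact hr_det_pointwise t ht1 ε η hε0 hε1 hηt (norm (y j))
        (norm_nonneg _) (fun i'' => norm (Gfam i'' j))
        (fun i'' => norm (Gfam i'' j - y j)) (hAj j) (hDj j)
    have hscale : ∀ i ∈ Finset.Icc 1 t,
        ∑ j, w j * (norm (y j) ^ 2 + 1) *
          (if ε * Real.sqrt ((1/2) ^ i) ≤ norm (Gfam i j - y j)
           then (1:ℝ) else 0) ≤ 16 * γ ^ 5 := by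
      intro i hi
      refine le_trans (Finset.sum_le_sum fun j _ => ?_) (hθselP i hi)
      have hb := hbridge i hi j
      have hw2 : w j * (norm (y j) ^ 2 + 1) ≤
          ((Q.count j : ℝ) / Q.card + 1 / N) * (norm (y j) ^ 2 + 1) :=
        mul_le_mul_of_nonneg_right (hwle j) (by positivity)
      have hind0 : (0:ℝ) ≤ (if ε * Real.sqrt ((1/2) ^ i) ≤ norm (Gfam i j - y j)
          then (1:ℝ) else 0) := by
        split <;> norm_num
      exact mul_le_mul hw2 hb hind0 (by positivity)
    have hstep : |(∑ j, w j * norm (y j) ^ 2)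
        - ∑ j, w j * (∑ i ∈ Finset.Icc 1 t, hfun i j)| ≤
        ∑ j, w j * |norm (y j) ^ 2 - ∑ i ∈ Finset.Icc 1 t, hfun i j| := by
      rw [← Finset.sum_sub_distrib]
      calc |∑ j, (w j * norm (y j) ^ 2 - w j * (∑ i ∈ Finset.Icc 1 t, hfun i j))|
          ≤ ∑ j, |w j * norm (y j) ^ 2
              - w j * (∑ i ∈ Finset.Icc 1 t, hfun i j)| :=
            Finset.abs_sum_le_sum_abs _ _
        _ = ∑ j, w j * |norm (y j) ^ 2 - ∑ i ∈ Finset.Icc 1 t, hfun i j| := by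
            refine Finset.sum_congr rfl fun j _ => ?_
            rw [← mul_sub, abs_mul, abs_of_nonneg (hw0 j)]
    refine le_trans hstep ?_
    have hVdef : (0:ℝ) ≤ 1 := zero_le_one
    calc ∑ j, w j * |norm (y j) ^ 2 - ∑ i ∈ Finset.Icc 1 t, hfun i j|
        ≤ ∑ j, w j * (3 * ε * norm (y j) ^ 2 + 9 * η
            + 10 * (norm (y j) ^ 2 + 1) *
              ∑ i ∈ Finset.Icc 1 t,
                (if ε * Real.sqrt ((1/2) ^ i) ≤ norm (Gfam i j - y j)
                 then (1:ℝ) else 0)) :=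
          Finset.sum_le_sum fun j _ => mul_le_mul_of_nonneg_left (hdet j) (hw0 j)
      _ = ∑ j, (3 * ε * (w j * norm (y j) ^ 2) + 9 * η * w j
            + 10 * ∑ i ∈ Finset.Icc 1 t, w j * (norm (y j) ^ 2 + 1) *
              (if ε * Real.sqrt ((1/2) ^ i) ≤ norm (Gfam i j - y j)
               then (1:ℝ) else 0)) := by
          refine Finset.sum_congr rfl fun j _ => ?_
          have e : ∑ i ∈ Finset.Icc 1 t, w j * (norm (y j) ^ 2 + 1) *
              (if ε * Real.sqrt ((1/2) ^ i) ≤ norm (Gfam i j - y j)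
               then (1:ℝ) else 0)
              = w j * (norm (y j) ^ 2 + 1) *
                ∑ i ∈ Finset.Icc 1 t,
                  (if ε * Real.sqrt ((1/2) ^ i) ≤ norm (Gfam i j - y j)
                   then (1:ℝ) else 0) := by
            rw [Finset.mul_sum]
          rw [e]
          ring
      _ = 3 * ε * (∑ j, w j * norm (y j) ^ 2) + 9 * η * (∑ j, w j)
          + 10 * ∑ j, ∑ i ∈ Finset.Icc 1 t, w j * (norm (y j) ^ 2 + 1) *
            (if ε * Real.sqrt ((1/2) ^ i) ≤ norm (Gfam i j - y j)
             then (1:ℝ) else 0) := by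
          rw [Finset.sum_add_distrib, Finset.sum_add_distrib, ← Finset.mul_sum,
            ← Finset.mul_sum, ← Finset.mul_sum]
      _ ≤ 3 * ε * (∑ j, w j * norm (y j) ^ 2) + 14 * η := by
          rw [hw1]
          have hlast : ∑ j, ∑ i ∈ Finset.Icc 1 t, w j * (norm (y j) ^ 2 + 1) *
              (if ε * Real.sqrt ((1/2) ^ i) ≤ norm (Gfam i j - y j)
               then (1:ℝ) else 0) ≤ (t:ℝ) * (16 * γ ^ 5) := by
            rw [Finset.sum_comm]
            calc ∑ i ∈ Finset.Icc 1 t, ∑ j, w j * (norm (y j) ^ 2 + 1) *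
                (if ε * Real.sqrt ((1/2) ^ i) ≤ norm (Gfam i j - y j)
                 then (1:ℝ) else 0)
                ≤ ∑ _i ∈ Finset.Icc 1 t, (16 * γ ^ 5 : ℝ) := Finset.sum_le_sum hscale
              _ = (t:ℝ) * (16 * γ ^ 5) := by
                  rw [Finset.sum_const, Nat.card_Icc, nsmul_eq_mul]
                  norm_num
          linarith [hgamma5]
  refine ⟨hfun, ?_, ?_, ?_⟩
  · intro i hi
    obtain ⟨hi1, hit⟩ := Finset.mem_Icc.1 hi
    have hGof : ∀ i'', 1 ≤ i'' → i'' ≤ i →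
        hrGof M ε L γ i (fun i' => θsel (i'.1 + 1)) i'' = Gfam i'' := by
      intro i'' h1 h2
      unfold hrGof
      rw [dif_pos ⟨h1, h2⟩]
      have e : i'' - 1 + 1 = i'' := by omega
      calc hrnet M ε L γ (i'' - 1 + 1)
            ((fun i' : Fin i => θsel (i'.1 + 1)) ⟨i'' - 1, by omega⟩)
          = Gfam (i'' - 1 + 1) := rfl
        _ = Gfam i'' := by rw [e]
    constructor
    · rw [Finset.mem_coe]
      unfold hrH
      rw [Finset.mem_image]
      refine ⟨fun i' => θsel (i'.1 + 1), Finset.mem_univ _, ?_⟩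
      funext j
      refine hrval_congr i ?_ ?_
      · rw [hGof i hi1 (le_refl i)]
      · intro i' hi'
        obtain ⟨h1', h2'⟩ := Finset.mem_Icc.1 hi'
        rw [hGof i' h1' (by omega)]
    · intro j
      refine ⟨hrval_nonneg _ _, ?_⟩
      have hb := hrval_le (fun i'' => norm (Gfam i'' j)) i
      have e : (9:ℝ) * (1/2) ^ i = 9 / 2 ^ i := by
        rw [div_pow, one_pow]
        ring
      rw [e] at hb
      exact hb
  · -- the Q average
    have hQc0 : (0:ℝ) < Q.card := by exact_mod_cast Multiset.card_pos.2 hQ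
    have hwQ0 : ∀ j, 0 ≤ (Q.count j : ℝ) / Q.card := fun j => by positivity
    have hwQ1 : ∑ j, (Q.count j : ℝ) / Q.card = 1 := by
      rw [← Finset.sum_div, hr_count_sum, div_self hQc0.ne']
    have hwQle : ∀ j, (Q.count j : ℝ) / Q.card ≤ (Q.count j : ℝ) / Q.card + 1 / N := by
      intro j
      have : (0:ℝ) ≤ 1 / N := by positivity
      linarith
    have hQagg := hagg (fun j => (Q.count j : ℝ) / Q.card) hwQ0 hwQ1 hwQle
    have hV0 : 0 ≤ ∑ j, (Q.count j : ℝ) / Q.card * norm (y j) ^ 2 :=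
      Finset.sum_nonneg fun j _ => by positivity
    have hS0 : 0 ≤ ∑ j, (Q.count j : ℝ) / Q.card * (∑ i ∈ Finset.Icc 1 t, hfun i j) :=
      Finset.sum_nonneg fun j _ => mul_nonneg (hwQ0 j)
        (Finset.sum_nonneg fun i _ => hrval_nonneg _ _)
    obtain ⟨hlow, hup⟩ := hr_icc hV0 hS0 hε0 hε1 hη0 hQagg
    have hconv1 : (1 / Q.card : ℝ) * (Q.map (fun j => norm (y j) ^ 2)).sum
        = ∑ j, (Q.count j : ℝ) / Q.card * norm (y j) ^ 2 := by
      rw [hr_multiset_avg, Finset.mul_sum]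
      exact Finset.sum_congr rfl fun j _ => by ring
    have hconv2 : (1 / Q.card : ℝ) * (Q.map (fun j => ∑ i ∈ Finset.Icc 1 t, hfun i j)).sum
        = ∑ j, (Q.count j : ℝ) / Q.card * (∑ i ∈ Finset.Icc 1 t, hfun i j) := by
      rw [hr_multiset_avg, Finset.mul_sum]
      exact Finset.sum_congr rfl fun j _ => by ring
    rw [Set.mem_Icc, hconv1, hconv2]
    exact ⟨hlow, hup⟩
  · -- the full average
    have hwN0 : ∀ _j : Fin N, (0:ℝ) ≤ 1 / N := fun _ => by positivity
    have hwN1 : ∑ _j : Fin N, (1:ℝ) / N = 1 := by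
      rw [Finset.sum_const, Finset.card_univ, Fintype.card_fin, nsmul_eq_mul]
      have hN0 : (0:ℝ) < N := by exact_mod_cast hN1
      field_simp
    have hwNle : ∀ j, (1:ℝ) / N ≤ (Q.count j : ℝ) / Q.card + 1 / N := by
      intro j
      have hQc0 : (0:ℝ) < Q.card := by exact_mod_cast Multiset.card_pos.2 hQ
      have : (0:ℝ) ≤ (Q.count j : ℝ) / Q.card := by positivity
      linarith
    have hNagg := hagg (fun _ => (1:ℝ) / N) hwN0 hwN1 hwNle
    have hV0 : 0 ≤ ∑ j, (1:ℝ) / N * norm (y j) ^ 2 :=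
      Finset.sum_nonneg fun j _ => by positivity
    have hS0 : 0 ≤ ∑ j, (1:ℝ) / N * (∑ i ∈ Finset.Icc 1 t, hfun i j) :=
      Finset.sum_nonneg fun j _ => mul_nonneg (hwN0 j)
        (Finset.sum_nonneg fun i _ => hrval_nonneg _ _)
    obtain ⟨hlow, hup⟩ := hr_icc hV0 hS0 hε0 hε1 hη0 hNagg
    have hconv1 : (1 / N : ℝ) * (∑ j, norm (y j) ^ 2)
        = ∑ j, (1:ℝ) / N * norm (y j) ^ 2 := by
      rw [Finset.mul_sum]
    have hconv2 : (1 / N : ℝ) * (∑ j, ∑ i ∈ Finset.Icc 1 t, hfun i j)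
        = ∑ j, (1:ℝ) / N * (∑ i ∈ Finset.Icc 1 t, hfun i j) := by
      rw [Finset.mul_sum]
    rw [Set.mem_Icc, hconv1, hconv2]
    exact ⟨hlow, hup⟩

set_option maxHeartbeats 1000000 in
/-- Multi-scale net decomposition (Lemma 3.5 of Haviv–Regev): there are small nets
`H_i` of nonnegative vectors bounded by `9·2⁻ⁱ` such that for every multiset `Q` and every
`x` with `‖x‖₁ = 1`, the averages of `|Mx|²` over `Q` and over `[N]` are both approximated,
up to multiplicative factor `1 ± O(ε)` and additive error `O(η)`, by the corresponding
averages of `∑ᵢ h⁽ⁱ⁾` with `h⁽ⁱ⁾ ∈ H_i`. -/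
theorem multiscale_net_decomposition :
    ∃ C₁ C₂ C₃ ε₀ : ℝ, 0 < C₁ ∧ 0 < C₂ ∧ 0 < C₃ ∧ 0 < ε₀ ∧
      ∀ (N : ℕ), 1 ≤ N →
      ∀ (M : Matrix (Fin N) (Fin N) ℂ),
        (⨆ p : Fin N × Fin N, ‖M p.1 p.2‖) = 1 →
      ∀ ε η : ℝ, 0 < η → η ≤ ε → ε ≤ ε₀ →
      letI t : ℕ := ⌈Real.logb 2 (1 / η)⌉₊
      letI γ : ℝ := η / (2 * t)
      ∃ H : ℕ → Set (Fin N → ℝ),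
        (∀ i ∈ Finset.Icc 1 t, (H i).Finite ∧
          ((H i).ncard : ℝ) ≤ (N : ℝ) ^ (C₃ * ε⁻¹ ^ 2 * 2 ^ i * Real.log (1 / γ))) ∧
        ∀ (Q : Multiset (Fin N)), Q ≠ 0 →
        ∀ (x : Fin N → ℂ), (∑ ℓ, ‖x ℓ‖) = 1 →
          ∃ h : ℕ → Fin N → ℝ,
            (∀ i ∈ Finset.Icc 1 t, h i ∈ H i ∧
              ∀ j, 0 ≤ h i j ∧ h i j ≤ 9 / 2 ^ i) ∧
            ((1 / Q.card : ℝ) *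
                (Q.map (fun j => ‖M.mulVec x j‖ ^ 2)).sum ∈
              Set.Icc
                ((1 - C₁ * ε) * ((1 / Q.card : ℝ) *
                    (Q.map (fun j => ∑ i ∈ Finset.Icc 1 t, h i j)).sum) - C₂ * η)
                ((1 + C₁ * ε) * ((1 / Q.card : ℝ) *
                    (Q.map (fun j => ∑ i ∈ Finset.Icc 1 t, h i j)).sum) + C₂ * η)) ∧
            ((1 / N : ℝ) * ∑ j, ‖M.mulVec x j‖ ^ 2 ∈
              Set.Icc
                ((1 - C₁ * ε) * ((1 / N : ℝ) *
                    ∑ j, ∑ i ∈ Finset.Icc 1 t, h i j) - C₂ * η)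
                ((1 + C₁ * ε) * ((1 / N : ℝ) *
                    ∑ j, ∑ i ∈ Finset.Icc 1 t, h i j) + C₂ * η)) := by
  classical
  refine ⟨4, 15, 20000, 1/100, by norm_num, by norm_num, by norm_num, by norm_num, ?_⟩
  intro N hN1 M hMsup ε η hη0 hηε hεε₀
  set t : ℕ := ⌈Real.logb 2 (1 / η)⌉₊ with htdef
  set γ : ℝ := η / (2 * (t:ℝ)) with hγdef
  have hε0 : 0 < ε := lt_of_lt_of_le hη0 hηε
  have hε1 : ε ≤ 1/100 := hεε₀
  have hη1 : η ≤ 1/100 := le_trans hηε hε1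
  have hlogb0 : 0 < Real.logb 2 (1 / η) :=
    Real.logb_pos (by norm_num) (by rw [lt_one_div (by norm_num) hη0]; linarith)
  have ht1 : 1 ≤ t := Nat.one_le_iff_ne_zero.2 (by
    have := Nat.ceil_pos.2 hlogb0
    omega)
  have h2t : 1 / η ≤ (2:ℝ) ^ t := by
    have h1 : Real.logb 2 (1 / η) ≤ (t:ℝ) := Nat.le_ceil _
    calc 1 / η = (2:ℝ) ^ Real.logb 2 (1 / η) :=
          (Real.rpow_logb (by norm_num) (by norm_num) (by positivity)).symm
      _ ≤ (2:ℝ) ^ ((t : ℕ) : ℝ) :=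
          Real.rpow_le_rpow_of_exponent_le (by norm_num) h1
      _ = (2:ℝ) ^ t := by rw [Real.rpow_natCast]
  have hηt : ((1:ℝ)/2) ^ t ≤ η := by
    rw [div_pow, one_pow, div_le_iff₀ (by positivity)]
    have h2 := (div_le_iff₀ hη0).1 h2t
    linarith
  have hηt2 : η / 2 ≤ ((1:ℝ)/2) ^ t := by
    have h1 : (t:ℝ) < Real.logb 2 (1 / η) + 1 := Nat.ceil_lt_add_one hlogb0.le
    have h2 : (2:ℝ) ^ ((t : ℕ) : ℝ) < (2:ℝ) ^ (Real.logb 2 (1 / η) + 1) :=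
      Real.rpow_lt_rpow_of_exponent_lt (by norm_num) h1
    rw [Real.rpow_natCast, Real.rpow_add (by norm_num), Real.rpow_logb (by norm_num)
      (by norm_num) (by positivity), Real.rpow_one] at h2
    rw [div_pow, one_pow, le_div_iff₀ (by positivity)]
    have h3 : (2:ℝ) ^ t * η ≤ 2 := by
      have h4 : (1/η) * 2 * η = 2 := by field_simp
      nlinarith
    linarith
  have ht0 : (0:ℝ) < (t:ℝ) := by exact_mod_cast Nat.lt_of_lt_of_le Nat.zero_lt_one ht1
  have hγ0 : 0 < γ := by
    show 0 < η / (2 * t)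
    positivity
  have hγ200 : γ ≤ 1/200 := by
    show η / (2 * t) ≤ 1/200
    have ht1' : (1:ℝ) ≤ t := by exact_mod_cast ht1
    rw [div_le_iff₀ (by positivity)]
    nlinarith
  by_cases hN : N = 1
  · -- the one-dimensional case
    subst hN
    refine ⟨fun i => {fun _ => if i = 1 then (1:ℝ) else 0}, ?_, ?_⟩
    · intro i hi
      refine ⟨Set.finite_singleton _, ?_⟩
      rw [Set.ncard_singleton]
      norm_num [Real.one_rpow]
    · intro Q hQ x hx
      have hQc0 : (0:ℝ) < Q.card := by exact_mod_cast Multiset.card_pos.2 hQ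
      have hM00 : norm (M 0 0) = 1 := by
        have h1 : (⨆ p : Fin 1 × Fin 1, norm (M p.1 p.2)) ≤ norm (M 0 0) := by
          refine ciSup_le fun p => ?_
          have hp : p = ((0 : Fin 1), (0 : Fin 1)) := Subsingleton.elim _ _
          rw [hp]
        have h2 : norm (M 0 0) ≤ ⨆ p : Fin 1 × Fin 1, norm (M p.1 p.2) :=
          le_ciSup (f := fun p : Fin 1 × Fin 1 => norm (M p.1 p.2))
            (Set.Finite.bddAbove (Set.finite_range _)) (((0:Fin 1), (0:Fin 1)))
        rw [hMsup] at h1 h2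
        linarith
      have hx1 : norm (x 0) = 1 := by
        rw [← hx, Fin.sum_univ_one]
      have hv : ∀ j, norm (M.mulVec x j) ^ 2 = 1 := by
        intro j
        have hj : j = 0 := Subsingleton.elim _ _
        have hmv : M.mulVec x j = M j 0 * x 0 := by
          simp [Matrix.mulVec, dotProduct, Fin.sum_univ_one]
        rw [hmv, norm_mul, hj, hM00, hx1]
        norm_num
      refine ⟨fun i _ => if i = 1 then (1:ℝ) else 0, ?_, ?_, ?_⟩
      · intro i hi
        obtain ⟨hi1, hit⟩ := Finset.mem_Icc.1 hi
        refine ⟨rfl, fun j => ?_⟩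
        show (0:ℝ) ≤ (if i = 1 then (1:ℝ) else 0) ∧ (if i = 1 then (1:ℝ) else 0) ≤ 9 / 2 ^ i
        by_cases h1 : i = 1
        · subst h1
          norm_num
        · rw [if_neg h1]
          refine ⟨le_refl 0, ?_⟩
          positivity
      · have hsum : ∀ j : Fin 1, ∑ i ∈ Finset.Icc 1 t, (if i = 1 then (1:ℝ) else 0) = 1 := by
          intro _
          rw [Finset.sum_ite_eq' (Finset.Icc 1 t) 1 (fun _ => (1:ℝ))]
          rw [if_pos (Finset.mem_Icc.2 ⟨le_refl 1, ht1⟩)]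
        have hmap1 : (Q.map (fun j => norm (M.mulVec x j) ^ 2)).sum = Q.card := by
          rw [Multiset.map_congr rfl (fun j _ => hv j)]
          rw [Multiset.map_const', Multiset.sum_replicate, nsmul_eq_mul, mul_one]
        have hmap2 : (Q.map (fun j => ∑ i ∈ Finset.Icc 1 t,
            (if i = 1 then (1:ℝ) else 0))).sum = Q.card := by
          rw [Multiset.map_congr rfl (fun j _ => hsum j)]
          rw [Multiset.map_const', Multiset.sum_replicate, nsmul_eq_mul, mul_one]
        rw [hmap1, hmap2, one_div, inv_mul_cancel₀ hQc0.ne']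
        rw [Set.mem_Icc]
        constructor <;> nlinarith
      · have hsum : ∑ i ∈ Finset.Icc 1 t, (if i = 1 then (1:ℝ) else 0) = 1 := by
          rw [Finset.sum_ite_eq' (Finset.Icc 1 t) 1 (fun _ => (1:ℝ))]
          rw [if_pos (Finset.mem_Icc.2 ⟨le_refl 1, ht1⟩)]
        rw [Fin.sum_univ_one, Fin.sum_univ_one, hv 0, hsum]
        rw [Set.mem_Icc]
        norm_num
        constructor <;> nlinarith
  · -- the main case
    have hN2 : 2 ≤ N := by omega
    have hMe : ∀ j l, norm (M j l) ≤ 1 := by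
      intro j l
      have hb : BddAbove (Set.range fun p : Fin N × Fin N => norm (M p.1 p.2)) :=
        Set.Finite.bddAbove (Set.finite_range _)
      have h := le_ciSup hb ((j, l) : Fin N × Fin N)
      rw [hMsup] at h
      exact h
    set L : ℝ := Real.log (1 / γ) with hLdef
    refine ⟨fun i => ↑(hrH M ε L γ i), ?_, ?_⟩
    · intro i hi
      refine ⟨Finset.finite_toSet _, ?_⟩
      rw [Set.ncard_coe_finset]
      exact hr_card hN2 M ε γ L hε0 hε1 hγ0 hγ200 hLdef i
    · intro Q hQ x hx
      exact hr_main hN1 M hMe ε η hη0 hηε hε1 t ht1 hηt hηt2 γ hγdef L hLdef Q hQ x hx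
end
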